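/- arXiv:2101.11910 — 3 statements merged into one kernel-verified Lean document; each statement's English description precedes it below -/
import Mathlib

section
/- The number of forests on vertex set {1,...,n} consisting of exactly t tree components such that the vertices 1,...,t all lie in different tree components equals t · n^{n−t−1}, for 1 ≤ t ≤ n. -/
open scoped Classical BigOperators
open Finset Filter

noncomputable section

/-- Rooted isomorphism between rooted graphs. -/
def RootedIso {V1 : Type*} {V2 : Type*} (G1 : SimpleGraph V1) (r1 : V1)
    (G2 : SimpleGraph V2) (r2 : V2) : Prop :=
  ∃ e : G1 ≃g G2, e r1 = r2

/-- Vertex set of the ball of radius `ℓ` around `r`. -/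
def ballSet {V : Type*} (G : SimpleGraph V) (r : V) (ℓ : ℕ) : Set V :=
  {v | G.Reachable r v ∧ G.dist r v ≤ ℓ}

lemma root_mem_ballSet {V : Type*} (G : SimpleGraph V) (r : V) (ℓ : ℕ) :
    r ∈ ballSet G r ℓ := ⟨SimpleGraph.Reachable.refl r, by rw [SimpleGraph.dist_self]; exact Nat.zero_le ℓ⟩

/-- `B_ℓ(G, r) ≅ (H, rH)`. -/
def BallIso {V W : Type*} (G : SimpleGraph V) (r : V) (ℓ : ℕ)
    (H : SimpleGraph W) (rH : W) : Prop :=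
  RootedIso (G.induce (ballSet G r ℓ)) ⟨r, root_mem_ballSet G r ℓ⟩ H rH

/-- For a uniformly random sample point `ω ∈ S` and a uniformly random root in `roots ω`,
the probability that the ball of radius `ℓ` around the root in `graph ω` is rooted-isomorphic
to `(H, rH)`. -/
def sampleBallProb {Ω : Type*} {V : Type*} (S : Finset Ω)
    (graph : Ω → SimpleGraph V) (roots : Ω → Finset V) (ℓ : ℕ)
    {W : Type*} (H : SimpleGraph W) (rH : W) : ℝ :=
  (S.card : ℝ)⁻¹ * ∑ ω ∈ S, ((roots ω).card : ℝ)⁻¹ *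
    ((roots ω).filter (fun v => BallIso (graph ω) v ℓ H rH)).card

/-! ### Plane trees, encoded by their sets of addresses -/

/-- A (finite) plane tree, encoded as the set of addresses of its vertices:
the root is `[]`, and the children of `l` are `l ++ [0], …, l ++ [d-1]`. -/
def IsPlaneTree (T : Finset (List ℕ)) : Prop :=
  [] ∈ T ∧ ∀ (l : List ℕ) (i : ℕ), l ++ [i] ∈ T → l ∈ T ∧ ∀ j < i, l ++ [j] ∈ T

/-- Number of children of the vertex `l` in the plane tree `T`. -/
def childCount (T : Finset (List ℕ)) (l : List ℕ) : ℕ :=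
  (T.filter (fun x => ∃ i : ℕ, x = l ++ [i])).card

/-- The Poisson point probabilities. -/
def poissonPMF (c : ℝ) (k : ℕ) : ℝ := Real.exp (-c) * c ^ k / (Nat.factorial k)

/-- The probability that the Galton--Watson tree with offspring distribution
Poisson(c) equals the plane tree `T`. -/
def gwWeight (c : ℝ) (T : Finset (List ℕ)) : ℝ :=
  ∏ l ∈ T, poissonPMF c (childCount T l)

/-- The probability that the truncation at depth `ℓ` of the Poisson(c)
Galton--Watson tree equals the plane tree `T` (of depth at most `ℓ`). -/
def gwTruncWeight (c : ℝ) (ℓ : ℕ) (T : Finset (List ℕ)) : ℝ :=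
  ∏ l ∈ T.filter (fun l => l.length < ℓ), poissonPMF c (childCount T l)

/-- The plane tree `T` as a simple graph on its addresses. -/
def treeGraph (T : Finset (List ℕ)) : SimpleGraph {l : List ℕ // l ∈ T} :=
  SimpleGraph.fromRel (fun a b => ∃ i : ℕ, (b : List ℕ) = (a : List ℕ) ++ [i])

/-- The root of a plane tree, as a vertex of `treeGraph`. -/
def treeRoot (T : Finset (List ℕ)) (hT : [] ∈ T) : {l : List ℕ // l ∈ T} := ⟨[], hT⟩

/-- `P(|GW_c| = k)`: probability that the Poisson(c) Galton--Watson tree has `k` vertices. -/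
def gwSizeProb (c : ℝ) (k : ℕ) : ℝ :=
  ∑' T : {T : Finset (List ℕ) // IsPlaneTree T ∧ T.card = k}, gwWeight c T.1

/-- `P(GW_c ≅ (H, rH))` as rooted graphs. -/
def gwIsoProb (c : ℝ) {W : Type*} (H : SimpleGraph W) (rH : W) : ℝ :=
  ∑' T : {T : Finset (List ℕ) // IsPlaneTree T},
    if RootedIso (treeGraph T.1) (treeRoot T.1 T.2.1) H rH then gwWeight c T.1 else 0

/-- `P(|GW_c| = k and GW_c ≅ (H, rH))`. -/
def gwIsoSizeProb (c : ℝ) (k : ℕ) {W : Type*} (H : SimpleGraph W) (rH : W) : ℝ :=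
  ∑' T : {T : Finset (List ℕ) // IsPlaneTree T ∧ T.card = k},
    if RootedIso (treeGraph T.1) (treeRoot T.1 T.2.1.1) H rH then gwWeight c T.1 else 0

/-- `P(B_ℓ(GW_c) ≅ (H, rH))`. -/
def gwBallProb (c : ℝ) (ℓ : ℕ) {W : Type*} (H : SimpleGraph W) (rH : W) : ℝ :=
  ∑' T : {T : Finset (List ℕ) // IsPlaneTree T ∧ ∀ l ∈ T, l.length ≤ ℓ},
    if RootedIso (treeGraph T.1) (treeRoot T.1 T.2.1.1) H rH then gwTruncWeight c ℓ T.1 else 0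

/-! ### The Skeleton tree with `d` rays and its balls -/

/-- Adjacency of the spine positions: a root position and `d` rays of length `ℓ`. -/
def spineAdj {d ℓ : ℕ} : (Unit ⊕ Fin d × Fin ℓ) → (Unit ⊕ Fin d × Fin ℓ) → Prop
  | Sum.inl _, Sum.inr (_, j) => (j : ℕ) = 0
  | Sum.inr (i, j), Sum.inr (i', j') => i = i' ∧ (j : ℕ) + 1 = (j' : ℕ)
  | _, _ => False

/-- The truncation radius of the Galton--Watson tree sitting at a spine position,
for the ball of radius `ℓ` around the root of the Skeleton tree with `d` rays. -/
def skelRad {d : ℕ} (ℓ : ℕ) : (Unit ⊕ Fin d × Fin ℓ) → ℕ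
  | Sum.inl _ => ℓ
  | Sum.inr (_, j) => ℓ - ((j : ℕ) + 1)

/-- Families of truncated plane trees indexing the possible balls of radius `ℓ`
of the Skeleton tree with `d` rays. -/
def SkelFam (d ℓ : ℕ) :=
  {T : (Unit ⊕ Fin d × Fin ℓ) → Finset (List ℕ) //
    ∀ i, IsPlaneTree (T i) ∧ ∀ l ∈ T i, l.length ≤ skelRad ℓ i}

/-- Vertices of the graph assembled from a family of plane trees along the spine. -/
def SkelVert {d ℓ : ℕ} (T : (Unit ⊕ Fin d × Fin ℓ) → Finset (List ℕ)) :=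
  {p : (Unit ⊕ Fin d × Fin ℓ) × List ℕ // p.2 ∈ T p.1}

/-- The graph assembled from a family of plane trees along the spine:
tree edges inside each tree, and spine edges between the roots of the trees. -/
def skelGraph {d ℓ : ℕ} (T : (Unit ⊕ Fin d × Fin ℓ) → Finset (List ℕ)) :
    SimpleGraph (SkelVert T) :=
  SimpleGraph.fromRel (fun a b =>
    (a.1.1 = b.1.1 ∧ ∃ i : ℕ, b.1.2 = a.1.2 ++ [i]) ∨
    (a.1.2 = [] ∧ b.1.2 = [] ∧ spineAdj a.1.1 b.1.1))

/-- The root of the assembled graph. -/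
def skelRoot {d ℓ : ℕ} (T : SkelFam d ℓ) : SkelVert T.1 :=
  ⟨(Sum.inl (), []), (T.2 (Sum.inl ())).1.1⟩

/-- `P(B_ℓ(Skeleton tree with d rays) ≅ (H, rH))`.  (The Skeleton tree with `d` rays is
obtained from the root with `d` infinite rays attached by replacing every vertex with an
independent Poisson(1) Galton--Watson tree; the Skeleton tree itself is the case `d = 1`.) -/
def skeletonBallProb (d ℓ : ℕ) {W : Type*} (H : SimpleGraph W) (rH : W) : ℝ :=
  ∑' T : SkelFam d ℓ,
    if RootedIso (skelGraph T.1) (skelRoot T) H rH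
    then ∏ i, gwTruncWeight 1 (skelRad ℓ i) (T.1 i) else 0

/-! ### The rooted tree `P_d`: a root with `d` infinite rays -/

def rayAdj {d : ℕ} : (Unit ⊕ Fin d × ℕ) → (Unit ⊕ Fin d × ℕ) → Prop
  | Sum.inl _, Sum.inr (_, j) => j = 0
  | Sum.inr (i, j), Sum.inr (i', j') => i = i' ∧ j + 1 = j'
  | _, _ => False

/-- `P_d`: the rooted tree whose root has degree `d` and all of whose
other vertices have degree 2. -/
def rayGraph (d : ℕ) : SimpleGraph (Unit ⊕ Fin d × ℕ) := SimpleGraph.fromRel rayAdj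

def rayRoot (d : ℕ) : Unit ⊕ Fin d × ℕ := Sum.inl ()

/-! ### Finite uniform models -/

/-- The graphs on `[n]` with exactly `m` edges. -/
def graphClass (n m : ℕ) : Finset (SimpleGraph (Fin n)) :=
  univ.filter (fun G => G.edgeFinset.card = m)

/-- The forests on `[n]` with exactly `t` tree components in which the
vertices `1, …, t` all lie in different tree components. -/
def forestSet (n t : ℕ) : Finset (SimpleGraph (Fin n)) :=
  univ.filter (fun G => G.IsAcyclic ∧ Fintype.card G.ConnectedComponent = t ∧
    ∀ i j : Fin n, (i : ℕ) < t → (j : ℕ) < t → G.Reachable i j → i = j)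

/-- The labelled trees on `[k]`. -/
def treeSet (k : ℕ) : Finset (SimpleGraph (Fin k)) :=
  univ.filter (fun G => G.IsTree)

/-- No component of `G` is complex, i.e. every component has at most as many
edges as vertices (counting edges inside a component via ordered adjacent pairs). -/
def NoComplexComponent {n : ℕ} (G : SimpleGraph (Fin n)) : Prop :=
  ∀ v : Fin n,
    ((univ : Finset (Fin n × Fin n)).filter
        (fun p => G.Adj p.1 p.2 ∧ G.Reachable v p.1)).card ≤
      2 * (univ.filter (fun w => G.Reachable v w)).card

/-- The Borel(1) probability `e^{-k} k^{k-1}/k!`. -/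
def borelProb (k : ℕ) : ℝ :=
  Real.exp (-(k : ℝ)) * (k : ℝ) ^ (k - 1) / (Nat.factorial k)

/-! ### Random rooted graphs as probability measures -/

instance : MeasurableSpace (SimpleGraph ℕ) := ⊤

/-- Ball probability of a random rooted (countable) graph given as a measure. -/
def mBallProb (μ : MeasureTheory.Measure (SimpleGraph ℕ × ℕ)) (ℓ : ℕ)
    {W : Type*} (H : SimpleGraph W) (rH : W) : ℝ :=
  (μ {p | BallIso p.1 p.2 ℓ H rH}).toReal

namespace Cayley

open Function

variable {n : ℕ}

/-- Functions fixing everything outside `K`. -/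
def FK (K : Finset (Fin n)) : Finset (Fin n → Fin n) :=
  Finset.univ.filter (fun f => ∀ v, v ∉ K → f v = v)

/-- No cycle within `K`. -/
def IsAcycOn (K : Finset (Fin n)) (f : Fin n → Fin n) : Prop :=
  ∀ v ∈ K, ∀ j, 0 < j → f^[j] v ≠ v

def AK (K : Finset (Fin n)) : Finset (Fin n → Fin n) :=
  (FK K).filter (IsAcycOn K)

lemma mem_FK {K : Finset (Fin n)} {f : Fin n → Fin n} :
    f ∈ FK K ↔ ∀ v, v ∉ K → f v = v := by simp [FK]

lemma mem_AK {K : Finset (Fin n)} {f : Fin n → Fin n} :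
    f ∈ AK K ↔ (∀ v, v ∉ K → f v = v) ∧ IsAcycOn K f := by simp [AK, mem_FK]

lemma card_FK (K : Finset (Fin n)) : (FK K).card = n ^ K.card := by
  rw [← Fintype.card_coe (FK K)]
  have e : {f // f ∈ FK K} ≃ (K → Fin n) :=
    { toFun := fun f k => f.1 k
      invFun := fun g => ⟨fun v => if h : v ∈ K then g ⟨v, h⟩ else v, by
        simp only [mem_FK]; intro v hv; simp [hv]⟩
      left_inv := by
        rintro ⟨f, hf⟩
        ext v
        by_cases h : v ∈ K
        · simp [h]
        · simp [h, mem_FK.1 hf v h]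
      right_inv := by
        intro g; funext k; simp }
  rw [Fintype.card_congr e, Fintype.card_fun]
  simp


/-! ### Orbit lemmas -/

section orbits
variable {α : Type*} [Fintype α]

lemma iter_cycle_mul {f : α → α} {v : α} {j : ℕ} (h : f^[j] v = v) :
    ∀ m, f^[j * m] v = v := by
  intro m
  induction m with
  | zero => simp
  | succ m ih => rw [Nat.mul_succ, Function.iterate_add_apply, h, ih]

/-- If `f` fixes everything outside `S` and `v` is on an `f`-cycle, the whole
orbit of `v` stays in `S`. -/
lemma orbit_mem_of_cycle {f : α → α} {S : Set α} (hfix : ∀ v, v ∉ S → f v = v)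
    {v : α} {j : ℕ} (hj : 0 < j) (hc : f^[j] v = v) (hv : v ∈ S) :
    ∀ i, f^[i] v ∈ S := by
  intro i
  by_contra h
  have hN : f^[j * (i+1)] v = v := iter_cycle_mul hc (i+1)
  have hge : i ≤ j * (i+1) := by nlinarith
  have : f^[j * (i+1)] v = f^[i] v := by
    obtain ⟨d, hd⟩ := Nat.le.dest hge
    rw [← hd, Nat.add_comm, Function.iterate_add_apply,
      Function.iterate_fixed (hfix _ h) d]
  rw [hN] at this
  exact h (this ▸ hv)

/-- Orbits transfer between functions agreeing on a set containing the orbit. -/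
lemma iterate_congr {f g : α → α} {S : Set α} (hfg : ∀ v ∈ S, f v = g v)
    {v : α} (horb : ∀ i, g^[i] v ∈ S) : ∀ i, f^[i] v = g^[i] v := by
  intro i
  induction i with
  | zero => rfl
  | succ i ih =>
    rw [Function.iterate_succ_apply', Function.iterate_succ_apply', ih,
      hfg _ (horb i)]

lemma orbit_mem_of_closed {f : α → α} {T : Set α} (hT : ∀ v ∈ T, f v ∈ T)
    {v : α} {i : ℕ} (hv : f^[i] v ∈ T) : ∀ m, i ≤ m → f^[m] v ∈ T := by
  intro m hm
  obtain ⟨d, rfl⟩ := Nat.le.dest hm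
  clear hm
  induction d with
  | zero => simpa using hv
  | succ d ih =>
    have : i + (d+1) = (i + d) + 1 := by ring
    rw [this, Function.iterate_succ_apply']
    exact hT _ ih

/-- An injective map has all points of a finite invariant set on cycles. -/
lemma exists_cycle_of_injective {f : α → α} (hf : Function.Injective f) (v : α) :
    ∃ j, 0 < j ∧ f^[j] v = v := by
  obtain ⟨a, b, hab, hfab⟩ :=
    Finite.exists_ne_map_eq_of_infinite (fun i : ℕ => f^[i] v)
  wlog hlt : a < b generalizing a b
  · exact this b a hab.symm hfab.symm (by omega)
  refine ⟨b - a, by omega, ?_⟩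
  have : f^[a] (f^[b-a] v) = f^[a] v := by
    rw [← Function.iterate_add_apply]
    have : a + (b - a) = b := by omega
    rw [this, hfab]
  exact hf.iterate a this

end orbits


/-! ### The cyclic part -/

def cycF (K : Finset (Fin n)) (f : Fin n → Fin n) : Finset (Fin n) :=
  K.filter (fun v => ∃ j, 0 < j ∧ f^[j] v = v)

lemma mem_cycF {K : Finset (Fin n)} {f : Fin n → Fin n} {v : Fin n} :
    v ∈ cycF K f ↔ v ∈ K ∧ ∃ j, 0 < j ∧ f^[j] v = v := by simp [cycF]

lemma cycF_subset (K : Finset (Fin n)) (f : Fin n → Fin n) : cycF K f ⊆ K :=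
  Finset.filter_subset _ _

lemma cycF_mapsTo {K : Finset (Fin n)} {f : Fin n → Fin n}
    (hf : ∀ v, v ∉ K → f v = v) {v : Fin n} (hv : v ∈ cycF K f) :
    f v ∈ cycF K f := by
  obtain ⟨hvK, j, hj, hcyc⟩ := mem_cycF.1 hv
  have horb : ∀ i, f^[i] v ∈ (K : Set (Fin n)) :=
    orbit_mem_of_cycle (S := (K : Set (Fin n))) (fun w hw => hf w hw) hj hcyc hvK
  refine mem_cycF.2 ⟨by simpa using horb 1, j, hj, ?_⟩
  rw [← Function.iterate_succ_apply, Function.iterate_succ_apply', hcyc]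

lemma cycF_injOn {K : Finset (Fin n)} {f : Fin n → Fin n}
    {v w : Fin n} (hv : v ∈ cycF K f) (hw : w ∈ cycF K f) (h : f v = f w) :
    v = w := by
  obtain ⟨hvK, jv, hjv, hcv⟩ := mem_cycF.1 hv
  obtain ⟨hwK, jw, hjw, hcw⟩ := mem_cycF.1 hw
  have hNv : f^[jv * jw] v = v := iter_cycle_mul hcv jw
  have hNw : f^[jv * jw] w = w := by rw [Nat.mul_comm]; exact iter_cycle_mul hcw jv
  have hN1 : 1 ≤ jv * jw := Nat.mul_pos hjv hjw
  calc v = f^[jv*jw] v := hNv.symm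
    _ = f^[jv*jw - 1] (f v) := by rw [← Function.iterate_succ_apply]; congr 1; omega
    _ = f^[jv*jw - 1] (f w) := by rw [h]
    _ = f^[jv*jw] w := by rw [← Function.iterate_succ_apply]; congr 1; omega
    _ = w := hNw

/-! ### Permutations supported on `C` -/

def permsOn (C : Finset (Fin n)) : Finset (Fin n → Fin n) :=
  (FK C).filter Function.Bijective

lemma mem_permsOn {C : Finset (Fin n)} {f : Fin n → Fin n} :
    f ∈ permsOn C ↔ (∀ v, v ∉ C → f v = v) ∧ Function.Bijective f := by
  simp [permsOn, mem_FK]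

lemma permsOn_mapsTo {C : Finset (Fin n)} {f : Fin n → Fin n}
    (hf : f ∈ permsOn C) {v : Fin n} (hv : v ∈ C) : f v ∈ C := by
  obtain ⟨hfix, hbij⟩ := mem_permsOn.1 hf
  by_contra h
  have := hfix _ h
  have h2 := hbij.1 this
  rw [h2] at h
  exact h hv

lemma card_permsOn (C : Finset (Fin n)) : (permsOn C).card = Nat.factorial C.card := by
  rw [← Fintype.card_coe (permsOn C)]
  have : Nat.factorial C.card = Fintype.card (Equiv.Perm C) := by
    rw [Fintype.card_perm, Fintype.card_coe]
  rw [this]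
  refine Fintype.card_congr ?_
  refine { toFun := fun f => Equiv.ofBijective
            (fun x : C => (⟨f.1 x, permsOn_mapsTo f.2 x.2⟩ : C)) ?_,
           invFun := fun σ => ⟨fun v => if h : v ∈ C then σ ⟨v, h⟩ else v, ?_⟩,
           left_inv := ?_, right_inv := ?_ }
  · constructor
    · rintro ⟨x, hx⟩ ⟨y, hy⟩ hxy
      exact Subtype.ext ((mem_permsOn.1 f.2).2.1 (congrArg Subtype.val hxy))
    · intro y
      have hinj : Function.Injective
          (fun x : C => (⟨f.1 x, permsOn_mapsTo f.2 x.2⟩ : C)) := by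
        rintro ⟨x, hx⟩ ⟨y, hy⟩ hxy
        exact Subtype.ext ((mem_permsOn.1 f.2).2.1 (congrArg Subtype.val hxy))
      exact (Finite.injective_iff_surjective.1 hinj) y
  · refine mem_permsOn.2 ⟨fun v hv => by simp [hv], ?_⟩
    have hinj : Function.Injective (fun v => if h : v ∈ C then (σ ⟨v, h⟩ : Fin n) else v) := by
      intro v w hvw
      by_cases hv : v ∈ C <;> by_cases hw : w ∈ C <;> simp [hv, hw] at hvw
      · exact hvw
      · exact absurd ((hvw ▸ (σ ⟨v, hv⟩).2) : w ∈ C) hw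
      · exact absurd ((hvw ▸ (σ ⟨w, hw⟩).2) : v ∈ C) hv
      · exact hvw
    exact Finite.injective_iff_bijective.1 hinj
  · rintro ⟨f, hf⟩
    ext v
    by_cases h : v ∈ C
    · simp [h]; rfl
    · simp [h, (mem_permsOn.1 hf).1 v h]
  · intro σ
    ext x
    simp [x.2]


/-! ### Fiber decomposition -/

lemma card_fiber (K C : Finset (Fin n)) (hC : C ⊆ K) :
    ((FK K).filter (fun f => cycF K f = C)).card
      = (permsOn C).card * (AK (K \ C)).card := by
  rw [← Finset.card_product]
  refine Finset.card_bij'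
    (fun f _ => ((fun v => if v ∈ C then f v else v), (fun v => if v ∈ K \ C then f v else v)))
    (fun p _ => fun v => if v ∈ C then p.1 v else p.2 v) ?_ ?_ ?_ ?_
  · -- forward membership
    rintro f hf
    rw [Finset.mem_filter] at hf
    obtain ⟨hfK, hcyc⟩ := hf
    rw [mem_FK] at hfK
    rw [Finset.mem_product]
    constructor
    · refine mem_permsOn.2 ⟨fun v hv => by simp [hv], ?_⟩
      refine Finite.injective_iff_bijective.1 ?_
      intro v w hvw
      by_cases hv : v ∈ C <;> by_cases hw : w ∈ C <;> simp [hv, hw] at hvw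
      · exact cycF_injOn (hcyc ▸ hv) (hcyc ▸ hw) hvw
      · exact absurd (hvw ▸ (hcyc ▸ cycF_mapsTo hfK (hcyc ▸ hv) : f v ∈ C)) hw
      · exact absurd (hvw.symm ▸ (hcyc ▸ cycF_mapsTo hfK (hcyc ▸ hw) : f w ∈ C)) hv
      · exact hvw
    · refine mem_AK.2 ⟨fun v hv => by simp [hv], ?_⟩
      intro v hv j hj hcj
      set g : Fin n → Fin n := fun v => if v ∈ K \ C then f v else v with hg
      have horb : ∀ i, g^[i] v ∈ ((K \ C : Finset (Fin n)) : Set (Fin n)) :=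
        orbit_mem_of_cycle (f := g) (S := ((K \ C : Finset (Fin n)) : Set (Fin n)))
          (fun w hw => by simp only [hg]; rw [if_neg (by simpa using hw)]) hj hcj
          (by simpa using hv)
      have hiter : ∀ i, f^[i] v = g^[i] v :=
        iterate_congr (S := ((K \ C : Finset (Fin n)) : Set (Fin n)))
          (fun w hw => by simp only [hg]; rw [if_pos (by simpa using hw)]) horb
      have : v ∈ cycF K f := mem_cycF.2 ⟨(Finset.mem_sdiff.1 hv).1, j, hj, by
        rw [hiter j, hcj]⟩
      rw [hcyc] at this
      exact (Finset.mem_sdiff.1 hv).2 this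
  · -- backward membership
    rintro ⟨σ, g⟩ hp
    rw [Finset.mem_product] at hp
    obtain ⟨hσ, hg⟩ := hp
    obtain ⟨hσfix, hσbij⟩ := mem_permsOn.1 hσ
    obtain ⟨hgfix, hgacyc⟩ := mem_AK.1 hg
    dsimp only at hσfix hσbij hgfix hgacyc hσ hg
    set h : Fin n → Fin n := fun v => if v ∈ C then σ v else g v with hh
    have hKfix : ∀ v, v ∉ K → h v = v := by
      intro v hv
      simp only [hh]
      rw [if_neg (fun hvc => hv (hC hvc)), hgfix v (by simp [hv])]
    have hCclosed : ∀ w ∈ (C : Set (Fin n)), h w ∈ (C : Set (Fin n))  := by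
      intro w hw
      simp only [hh]
      rw [if_pos (by simpa using hw)]
      simpa using permsOn_mapsTo hσ (by simpa using hw)
    have hCorb : ∀ v ∈ C, ∀ i, h^[i] v ∈ (C : Set (Fin n)) := by
      intro v hv i
      exact orbit_mem_of_closed hCclosed (i := 0) (by simpa using hv) i (Nat.zero_le i)
    have hCiter : ∀ v ∈ C, ∀ i, h^[i] v = σ^[i] v := by
      intro v hv i
      refine iterate_congr (g := h) (S := (C : Set (Fin n)))
        (fun w hw => by simp only [hh]; rw [if_pos (by simpa using hw)]) (hCorb v hv) i
        |>.symm ▸ rfl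
    rw [Finset.mem_filter]
    refine ⟨mem_FK.2 hKfix, ?_⟩
    ext v
    constructor
    · intro hv
      obtain ⟨hvK, j, hj, hcyc⟩ := mem_cycF.1 hv
      by_contra hvC
      have hnotC : ∀ i, h^[i] v ∉ (C : Set (Fin n)) := by
        intro i hi
        have hm : h^[j * (i+1)] v ∈ (C : Set (Fin n)) :=
          orbit_mem_of_closed hCclosed hi (j * (i+1)) (by nlinarith)
        rw [iter_cycle_mul hcyc (i+1)] at hm
        exact hvC (by simpa using hm)
      have hK : ∀ i, h^[i] v ∈ (K : Set (Fin n)) :=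
        orbit_mem_of_cycle (fun w hw => hKfix w (by simpa using hw)) hj hcyc
          (by simpa using hvK)
      have horb : ∀ i, h^[i] v ∈ ((K \ C : Finset (Fin n)) : Set (Fin n)) := by
        intro i
        simp only [Finset.coe_sdiff, Set.mem_diff]
        exact ⟨hK i, fun hc => hnotC i (by simpa using hc)⟩
      have hgi : ∀ i, g^[i] v = h^[i] v :=
        iterate_congr (S := ((K \ C : Finset (Fin n)) : Set (Fin n)))
          (fun w hw => by
            simp only [hh]
            rw [if_neg]
            intro hwC
            simp only [Finset.coe_sdiff, Set.mem_diff, Finset.mem_coe] at hw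
            exact hw.2 hwC) horb
      have hv' : v ∈ K \ C := Finset.mem_sdiff.2 ⟨hvK, hvC⟩
      exact hgacyc v hv' j hj (by rw [hgi j, hcyc])
    · intro hv
      refine mem_cycF.2 ⟨hC hv, ?_⟩
      obtain ⟨j, hj, hcyc⟩ := exists_cycle_of_injective hσbij.1 v
      exact ⟨j, hj, by rw [hCiter v hv j, hcyc]⟩
  · -- left inverse
    intro f hf
    rw [Finset.mem_filter] at hf
    have hfK := mem_FK.1 hf.1
    funext v
    by_cases hvC : v ∈ C
    · simp [hvC, Finset.mem_sdiff]
    · by_cases hvK : v ∈ K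
      · simp [hvC, Finset.mem_sdiff, hvK]
      · simp [hvC, Finset.mem_sdiff, hvK, hfK v hvK]
  · -- right inverse
    rintro ⟨σ, g⟩ hp
    rw [Finset.mem_product] at hp
    obtain ⟨hσ, hg⟩ := hp
    obtain ⟨hσfix, hσbij⟩ := mem_permsOn.1 hσ
    obtain ⟨hgfix, hgacyc⟩ := mem_AK.1 hg
    dsimp only at hσfix hσbij hgfix hgacyc
    refine Prod.ext ?_ ?_
    · funext v
      by_cases hvC : v ∈ C
      · simp [hvC]
      · simp [hvC, hσfix v hvC]
    · funext v
      by_cases hvKC : v ∈ K \ C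
      · simp [hvKC, (Finset.mem_sdiff.1 hvKC).2]
      · simp only [if_neg hvKC]
        exact (hgfix v hvKC).symm


lemma decomp (K : Finset (Fin n)) :
    n ^ K.card = ∑ C ∈ K.powerset, Nat.factorial C.card * (AK (K \ C)).card := by
  rw [← card_FK]
  rw [Finset.card_eq_sum_card_fiberwise
    (f := cycF K) (t := K.powerset) (fun f _ => Finset.mem_powerset.2 (cycF_subset K f))]
  exact Finset.sum_congr rfl fun C hC => by
    rw [card_fiber K C (Finset.mem_powerset.1 hC), card_permsOn]

lemma exists_perm_map (K K' : Finset (Fin n)) (h : K.card = K'.card) :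
    ∃ σ : Fin n ≃ Fin n, ∀ v, v ∈ K ↔ σ v ∈ K' := by
  have h2 : Kᶜ.card = K'ᶜ.card := by simp [Finset.card_compl, h]
  have e : {x : Fin n // x ∈ K} ≃ {x : Fin n // x ∈ K'} := Finset.equivOfCardEq h
  have e2 : {x : Fin n // ¬ x ∈ K} ≃ {x : Fin n // ¬ x ∈ K'} :=
    ((Equiv.subtypeEquivRight (fun x => (Finset.mem_compl (s := K)).symm)).trans
      (Finset.equivOfCardEq h2)).trans
      (Equiv.subtypeEquivRight (fun x => Finset.mem_compl (s := K')))
  refine ⟨(Equiv.sumCompl (· ∈ K)).symm.trans ((e.sumCongr e2).trans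
    (Equiv.sumCompl (· ∈ K'))), ?_⟩
  intro v
  by_cases hv : v ∈ K
  · simp only [Equiv.trans_apply, Equiv.sumCompl_symm_apply_of_pos hv,
      Equiv.sumCongr_apply, Sum.map_inl, Equiv.sumCompl_apply_inl]
    exact ⟨fun _ => (e ⟨v, hv⟩).2, fun _ => hv⟩
  · simp only [Equiv.trans_apply, Equiv.sumCompl_symm_apply_of_neg hv,
      Equiv.sumCongr_apply, Sum.map_inr, Equiv.sumCompl_apply_inr]
    exact ⟨fun hc => absurd hc hv, fun hc => absurd hc (e2 ⟨v, hv⟩).2⟩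

lemma conj_iterate (σ : Fin n ≃ Fin n) (f : Fin n → Fin n) (j : ℕ) (v : Fin n) :
    (⇑σ ∘ f ∘ ⇑σ.symm)^[j] v = σ (f^[j] (σ.symm v)) := by
  induction j with
  | zero => simp
  | succ j ih =>
    rw [Function.iterate_succ_apply', ih, Function.iterate_succ_apply']
    simp

lemma conj_mem_AK {K K' : Finset (Fin n)} (σ : Fin n ≃ Fin n)
    (hσ : ∀ v, v ∈ K ↔ σ v ∈ K') {f : Fin n → Fin n} (hf : f ∈ AK K) :
    (⇑σ ∘ f ∘ ⇑σ.symm) ∈ AK K' := by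
  obtain ⟨hfix, hacyc⟩ := mem_AK.1 hf
  refine mem_AK.2 ⟨?_, ?_⟩
  · intro v hv
    have h1 : σ.symm v ∉ K := fun hc => hv (by simpa using (hσ (σ.symm v)).1 hc)
    simp [hfix _ h1]
  · intro v hv j hj hcyc
    rw [conj_iterate] at hcyc
    have : σ.symm v ∈ K := (hσ (σ.symm v)).2 (by simpa using hv)
    exact hacyc _ this j hj (by
      have := congrArg σ.symm hcyc
      simpa using this)

lemma AK_card_eq {K K' : Finset (Fin n)} (h : K.card = K'.card) :
    (AK K).card = (AK K').card := by
  obtain ⟨σ, hσ⟩ := exists_perm_map K K' h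
  have hσ' : ∀ v, v ∈ K' ↔ σ.symm v ∈ K := by
    intro v
    have := hσ (σ.symm v)
    rw [Equiv.apply_symm_apply] at this
    exact this.symm
  refine Finset.card_bij' (fun f _ => ⇑σ ∘ f ∘ ⇑σ.symm) (fun g _ => ⇑σ.symm ∘ g ∘ ⇑σ)
    (fun f hf => conj_mem_AK σ hσ hf) ?_ ?_ ?_
  · intro g hg
    have := conj_mem_AK σ.symm hσ' hg
    simpa using this
  · intro f _; funext v; simp
  · intro g _; funext v; simp


/-! ### The count -/

def K0 (n k : ℕ) : Finset (Fin n) := Finset.univ.filter (fun v => (v : ℕ) < k)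

lemma card_K0 {k : ℕ} (h : k ≤ n) : (K0 n k).card = k := by
  have := Finset.card_bij (fun (v : Fin n) (hv : v ∈ K0 n k) =>
      (⟨(v : ℕ), by simpa [K0] using hv⟩ : Fin k))
    (fun v hv => Finset.mem_univ _)
    (fun v hv w hw hvw => by
      simp only [Fin.mk.injEq] at hvw
      exact Fin.val_injective hvw)
    (fun b _ => ⟨⟨(b : ℕ), lt_of_lt_of_le b.2 h⟩, by simp [K0], rfl⟩)
  simpa using this

def aF (n k : ℕ) : ℕ := (AK (K0 n k)).card

lemma AK_empty : (AK (∅ : Finset (Fin n))).card = 1 := by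
  have : AK (∅ : Finset (Fin n)) = {id} := by
    ext f
    simp only [mem_AK, IsAcycOn, Finset.notMem_empty, Finset.mem_singleton]
    constructor
    · rintro ⟨h1, -⟩
      funext v
      exact h1 v (by simp)
    · rintro rfl
      exact ⟨fun v _ => rfl, fun v hv => absurd hv (by simp)⟩
  rw [this, Finset.card_singleton]

lemma aF_zero : aF n 0 = 1 := by
  have : K0 n 0 = (∅ : Finset (Fin n)) := by
    ext v; simp [K0]
  rw [aF, this, AK_empty]

lemma recurrence {k : ℕ} (hk : k ≤ n) :
    n ^ k = ∑ c ∈ Finset.range (k+1),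
      k.choose c * (Nat.factorial c * aF n (k - c)) := by
  have h1 := decomp (K0 n k)
  rw [card_K0 hk] at h1
  rw [h1, Finset.sum_powerset, card_K0 hk]
  refine Finset.sum_congr rfl fun c hc => ?_
  rw [Finset.mem_range] at hc
  have hconst : ∀ C ∈ (K0 n k).powersetCard c,
      Nat.factorial C.card * (AK (K0 n k \ C)).card
        = Nat.factorial c * aF n (k - c) := by
    intro C hC
    obtain ⟨hsub, hcard⟩ := Finset.mem_powersetCard.1 hC
    rw [hcard]
    congr 1
    refine AK_card_eq ?_
    rw [Finset.card_sdiff_of_subset hsub, card_K0 hk, hcard, card_K0 (by omega)]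
  rw [Finset.sum_congr rfl hconst, Finset.sum_const, Finset.card_powersetCard,
    card_K0 hk, smul_eq_mul]

lemma coeff_eq {j k : ℕ} (hj : j ≤ k) :
    ((k.choose (k-j) * Nat.factorial (k-j) : ℕ) : ℝ)
      = (Nat.factorial k : ℝ) / (Nat.factorial j : ℝ) := by
  have h := Nat.choose_mul_factorial_mul_factorial (Nat.sub_le k j)
  rw [Nat.sub_sub_self hj] at h
  have hj0 : (Nat.factorial j : ℝ) ≠ 0 := Nat.cast_ne_zero.2 (Nat.factorial_ne_zero j)
  rw [Nat.choose_symm hj] at h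
  field_simp
  rw [Nat.choose_symm hj]
  exact_mod_cast h

lemma aF_real (hn : 1 ≤ n) : ∀ k, k ≤ n → 1 ≤ k →
    (aF n k : ℝ) = ((n:ℝ) - k) * (n:ℝ) ^ (k - 1) := by
  intro k
  induction k using Nat.strong_induction_on with
  | _ k ih =>
    intro hkn hk1
    have hrec := recurrence (n := n) hkn
    have hcast : ((n:ℝ)) ^ k = ∑ c ∈ Finset.range (k+1),
        ((k.choose c : ℝ) * (Nat.factorial c * aF n (k - c))) := by
      exact_mod_cast congrArg (Nat.cast : ℕ → ℝ) hrec
    rw [Finset.sum_range_succ'] at hcast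
    simp only [Nat.choose_zero_right, Nat.cast_one, Nat.factorial_zero, Nat.sub_zero,
      one_mul, Nat.cast_mul] at hcast
    -- hcast : n^k = (∑ i in range k, choose (i+1) * ((i+1)! * aF n (k-(i+1)))) + aF n k
    set G : ℕ → ℝ := fun j => (Nat.factorial k : ℝ) / (Nat.factorial j : ℝ) * (n:ℝ)^j
      with hG
    set g : ℕ → ℝ := fun j => (Nat.factorial k : ℝ) / (Nat.factorial j : ℝ) * (aF n j : ℝ)
      with hg
    have hsum : (∑ i ∈ Finset.range k,
        ((k.choose (i+1) : ℝ) * ((Nat.factorial (i+1) : ℝ) * (aF n (k - (i+1)) : ℝ))))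
        = (k : ℝ) * (n:ℝ)^(k-1) := by
      have hre : ∀ i ∈ Finset.range k,
          ((k.choose (i+1) : ℝ) * ((Nat.factorial (i+1) : ℝ) * (aF n (k - (i+1)) : ℝ)))
          = g (k - 1 - i) := by
        intro i hi
        rw [Finset.mem_range] at hi
        rw [hg]
        dsimp only
        have h1 : k - (i+1) = k - 1 - i := by omega
        have h2 : k - (k - 1 - i) = i + 1 := by omega
        have h3 : k - 1 - i ≤ k := by omega
        rw [h1, ← coeff_eq h3, h2]
        push_cast
        ring
      rw [Finset.sum_congr rfl hre, Finset.sum_range_reflect g k]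
      have hsplit := Finset.sum_range_succ' g (k-1)
      have hk' : k - 1 + 1 = k := by omega
      rw [hk'] at hsplit
      rw [hsplit]
      have hterm : ∀ i ∈ Finset.range (k-1), g (i+1) = G (i+1) - G i := by
        intro i hi
        rw [Finset.mem_range] at hi
        have hIH : (aF n (i+1) : ℝ) = ((n:ℝ) - ((i:ℝ)+1)) * (n:ℝ)^i := by
          have := ih (i+1) (by omega) (by omega) (by omega)
          simpa using this
        rw [hg, hG]
        dsimp only
        rw [hIH]
        have hfac : (Nat.factorial (i+1) : ℝ) = ((i:ℝ)+1) * Nat.factorial i := by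
          rw [Nat.factorial_succ]; push_cast; ring
        have hne : (Nat.factorial i : ℝ) ≠ 0 := Nat.cast_ne_zero.2 (Nat.factorial_ne_zero i)
        have hne1 : ((i:ℝ)+1) ≠ 0 := by positivity
        rw [hfac]
        field_simp
        ring
      have hg0 : g 0 = (Nat.factorial k : ℝ) := by
        rw [hg]; simp [aF_zero]
      rw [Finset.sum_congr rfl hterm, Finset.sum_range_sub G, hg0]
      have hGk : G (k-1) = (k:ℝ) * (n:ℝ)^(k-1) := by
        rw [hG]
        dsimp only
        have hfk : Nat.factorial k = k * Nat.factorial (k-1) := by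
          conv_lhs => rw [show k = (k-1)+1 by omega]
          rw [Nat.factorial_succ, hk']
        rw [hfk]
        have hne : (Nat.factorial (k-1) : ℝ) ≠ 0 := Nat.cast_ne_zero.2 (Nat.factorial_ne_zero _)
        push_cast
        field_simp
      have hG0 : G 0 = (Nat.factorial k : ℝ) := by simp [hG]
      rw [hGk, hG0]
      ring
    rw [hsum] at hcast
    have hpow : (n:ℝ)^k = (n:ℝ) * (n:ℝ)^(k-1) := by
      conv_lhs => rw [show k = (k-1)+1 by omega]
      rw [pow_succ]
      ring
    have : (aF n k : ℝ) = (n:ℝ)^k - (k:ℝ) * (n:ℝ)^(k-1) := by linarith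
    rw [this, hpow]
    ring


/-! ### The forest/function bijection -/

def Kt (n t : ℕ) : Finset (Fin n) := Finset.univ.filter (fun v => t ≤ (v : ℕ))

lemma mem_Kt {t : ℕ} {v : Fin n} : v ∈ Kt n t ↔ t ≤ (v : ℕ) := by simp [Kt]

lemma not_mem_Kt {t : ℕ} {v : Fin n} : v ∉ Kt n t ↔ (v : ℕ) < t := by simp [Kt]

lemma card_Kt {t : ℕ} (h : t ≤ n) : (Kt n t).card = n - t := by
  have hc : Kt n t = (K0 n t)ᶜ := by
    ext v; simp [Kt, K0, not_lt]
  rw [hc, Finset.card_compl, card_K0 h, Fintype.card_fin]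

def graphOf (n t : ℕ) (f : Fin n → Fin n) : SimpleGraph (Fin n) :=
  SimpleGraph.fromRel (fun a b => t ≤ (a : ℕ) ∧ b = f a)

lemma graphOf_adj {t : ℕ} {f : Fin n → Fin n} {a b : Fin n} :
    (graphOf n t f).Adj a b ↔ a ≠ b ∧ ((a ∈ Kt n t ∧ b = f a) ∨ (b ∈ Kt n t ∧ a = f b)) := by
  simp [graphOf, SimpleGraph.fromRel_adj, mem_Kt]

section withf

variable {t : ℕ} {f : Fin n → Fin n}

lemma exists_iter_root (hacyc : IsAcycOn (Kt n t) f) (v : Fin n) :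
    ∃ j, f^[j] v ∉ Kt n t := by
  obtain ⟨a, b, hab, heq⟩ := Finite.exists_ne_map_eq_of_infinite (fun i : ℕ => f^[i] v)
  wlog hlt : a < b generalizing a b
  · exact this b a hab.symm heq.symm (by omega)
  by_cases hu : f^[a] v ∈ Kt n t
  · exfalso
    refine hacyc _ hu (b - a) (by omega) ?_
    rw [← Function.iterate_add_apply, show b - a + a = b by omega, ← heq]
  · exact ⟨a, hu⟩

variable (hacyc : IsAcycOn (Kt n t) f)

include hacyc

def rho (v : Fin n) : ℕ := Nat.find (exists_iter_root hacyc v)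

lemma rho_spec (v : Fin n) : f^[rho hacyc v] v ∉ Kt n t :=
  Nat.find_spec (exists_iter_root hacyc v)

lemma rho_le {v : Fin n} {j : ℕ} (h : f^[j] v ∉ Kt n t) : rho hacyc v ≤ j :=
  Nat.find_le h

lemma rho_min {v : Fin n} {i : ℕ} (h : i < rho hacyc v) : f^[i] v ∈ Kt n t := by
  have := Nat.find_min (exists_iter_root hacyc v) h
  simpa using this

lemma rho_eq_zero {v : Fin n} (h : v ∉ Kt n t) : rho hacyc v = 0 :=
  Nat.le_zero.1 (rho_le hacyc (by simpa using h))

lemma rho_pos {v : Fin n} (h : v ∈ Kt n t) : 0 < rho hacyc v := by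
  rcases Nat.eq_zero_or_pos (rho hacyc v) with h0 | h0
  · exact absurd (by simpa [h0] using rho_spec hacyc v) (by simp [h])
  · exact h0

lemma rho_succ {v : Fin n} (h : v ∈ Kt n t) :
    rho hacyc v = rho hacyc (f v) + 1 := by
  have h1 : rho hacyc (f v) ≤ rho hacyc v - 1 := by
    refine rho_le hacyc ?_
    have hpos := rho_pos hacyc h
    have heq : f^[rho hacyc v - 1] (f v) = f^[rho hacyc v] v := by
      rw [← Function.iterate_succ_apply]
      congr 1
      omega
    rw [heq]
    exact rho_spec hacyc v
  have h2 : rho hacyc v ≤ rho hacyc (f v) + 1 := by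
    refine rho_le hacyc ?_
    rw [Function.iterate_succ_apply]
    exact rho_spec hacyc (f v)
  have := rho_pos hacyc h
  omega

def rootOf (v : Fin n) : Fin n := f^[rho hacyc v] v

lemma rootOf_not_mem (v : Fin n) : rootOf hacyc v ∉ Kt n t := rho_spec hacyc v

lemma rootOf_of_not_mem {v : Fin n} (h : v ∉ Kt n t) : rootOf hacyc v = v := by
  rw [rootOf, rho_eq_zero hacyc h, Function.iterate_zero_apply]

lemma rootOf_apply {v : Fin n} (h : v ∈ Kt n t) :
    rootOf hacyc (f v) = rootOf hacyc v := by
  rw [rootOf, rootOf, rho_succ hacyc h, Function.iterate_succ_apply]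

lemma fixed_ne {v : Fin n} (h : v ∈ Kt n t) : f v ≠ v := fun hc =>
  hacyc v h 1 one_pos (by simpa using hc)

lemma adj_graphOf {v : Fin n} (h : v ∈ Kt n t) : (graphOf n t f).Adj v (f v) :=
  graphOf_adj.2 ⟨(fixed_ne hacyc h).symm, Or.inl ⟨h, rfl⟩⟩

omit hacyc in
lemma adj_step {a b : Fin n} (h : (graphOf n t f).Adj a b) :
    (a ∈ Kt n t ∧ b = f a) ∨ (b ∈ Kt n t ∧ a = f b) :=
  (graphOf_adj.1 h).2

lemma adj_root_eq {a b : Fin n} (h : (graphOf n t f).Adj a b) :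
    rootOf hacyc a = rootOf hacyc b := by
  rcases adj_step (f := f) h with ⟨ha, rfl⟩ | ⟨hb, rfl⟩
  · exact (rootOf_apply hacyc ha).symm
  · exact rootOf_apply hacyc hb

lemma reach_root_eq {a b : Fin n} (h : (graphOf n t f).Reachable a b) :
    rootOf hacyc a = rootOf hacyc b := by
  obtain ⟨w⟩ := h
  induction w with
  | nil => rfl
  | cons hadj _ ih => exact (adj_root_eq hacyc hadj).trans ih

lemma reachable_rootOf (v : Fin n) : (graphOf n t f).Reachable v (rootOf hacyc v) := by
  generalize hr : rho hacyc v = m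
  induction m generalizing v with
  | zero =>
    have : v ∉ Kt n t := by
      by_contra hc
      have := rho_pos hacyc hc
      omega
    rw [rootOf_of_not_mem hacyc this]
  | succ m ih =>
    have hv : v ∈ Kt n t := by
      by_contra hc
      rw [rho_eq_zero hacyc hc] at hr
      omega
    have h1 : rho hacyc (f v) = m := by
      have := rho_succ hacyc hv
      omega
    exact ((adj_graphOf hacyc hv).reachable).trans
      ((rootOf_apply hacyc hv) ▸ ih (f v) h1)

lemma reach_iff_root {a b : Fin n} :
    (graphOf n t f).Reachable a b ↔ rootOf hacyc a = rootOf hacyc b := by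
  refine ⟨reach_root_eq hacyc, fun h => ?_⟩
  exact (reachable_rootOf hacyc a).trans (h ▸ (reachable_rootOf hacyc b).symm)

lemma graphOf_isAcyclic : (graphOf n t f).IsAcyclic := by
  intro v c hc
  obtain ⟨x, hxmem, hxmax⟩ :=
    Finset.exists_max_image c.support.toFinset (rho hacyc)
      ⟨v, by simp [SimpleGraph.Walk.start_mem_support]⟩
  rw [List.mem_toFinset] at hxmem
  have hsub : ∀ y ∈ (c.rotate x hxmem).support, y ∈ c.support := by
    intro y hy
    rw [SimpleGraph.Walk.rotate, SimpleGraph.Walk.mem_support_append_iff] at hy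
    rcases hy with hy | hy
    · exact SimpleGraph.Walk.support_dropUntil_subset c hxmem hy
    · exact SimpleGraph.Walk.support_takeUntil_subset c hxmem hy
  have hc' := hc.rotate hxmem
  set c' := c.rotate x hxmem with hc'def
  clear_value c'
  cases c' with
  | nil => exact hc'.ne_nil rfl
  | @cons _ y1 _ h q =>
    rw [SimpleGraph.Walk.cons_isCycle_iff] at hc'
    obtain ⟨hqpath, hqe⟩ := hc'
    obtain ⟨y2, h2, q2, hq2⟩ :=
      SimpleGraph.Walk.exists_eq_cons_of_ne (h.ne) q.reverse
    have hy1 : y1 ∈ c.support := hsub y1 (by simp)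
    have hy2 : y2 ∈ c.support := by
      refine hsub y2 ?_
      have : y2 ∈ q.reverse.support := by rw [hq2]; simp
      rw [SimpleGraph.Walk.support_reverse, List.mem_reverse] at this
      simp [this]
    have hmax1 : rho hacyc y1 ≤ rho hacyc x := hxmax y1 (List.mem_toFinset.2 hy1)
    have hmax2 : rho hacyc y2 ≤ rho hacyc x := hxmax y2 (List.mem_toFinset.2 hy2)
    have hfy1 : y1 = f x := by
      rcases adj_step (f := f) h with ⟨hx, he⟩ | ⟨hy, he⟩
      · exact he
      · exfalso
        have hs := rho_succ hacyc hy
        rw [← he] at hs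
        omega
    have hfy2 : y2 = f x := by
      rcases adj_step (f := f) h2 with ⟨hx, he⟩ | ⟨hy, he⟩
      · exact he
      · exfalso
        have hs := rho_succ hacyc hy
        rw [← he] at hs
        omega
    refine hqe ?_
    have hmem : s(x, y2) ∈ q.reverse.edges := by
      rw [hq2]
      simp
    rw [SimpleGraph.Walk.edges_reverse, List.mem_reverse] at hmem
    rw [hfy2] at hmem
    have heq : s(x, y1) = s(x, f x) := by rw [hfy1]
    rw [heq]
    exact hmem

def componentsEquiv (htn : t ≤ n) :
    (graphOf n t f).ConnectedComponent ≃ {v : Fin n // (v : ℕ) < t} where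
  toFun := SimpleGraph.ConnectedComponent.lift
    (fun v => ⟨rootOf hacyc v, not_mem_Kt.1 (rootOf_not_mem hacyc v)⟩)
    (fun v w p _ => Subtype.ext (reach_root_eq hacyc ⟨p⟩))
  invFun := fun r => (graphOf n t f).connectedComponentMk r.1
  left_inv := by
    refine SimpleGraph.ConnectedComponent.ind (fun v => ?_)
    exact SimpleGraph.ConnectedComponent.eq.2 ((reachable_rootOf hacyc v).symm)
  right_inv := by
    rintro ⟨r, hr⟩
    exact Subtype.ext (rootOf_of_not_mem hacyc (not_mem_Kt.2 hr))

lemma card_components (htn : t ≤ n) :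
    Fintype.card (graphOf n t f).ConnectedComponent = t := by
  rw [Fintype.card_congr (componentsEquiv hacyc htn), Fintype.card_subtype]
  exact card_K0 htn

end withf

lemma graphOf_mem_forestSet {t : ℕ} {f : Fin n → Fin n} (htn : t ≤ n)
    (hf : f ∈ AK (Kt n t)) : graphOf n t f ∈ forestSet n t := by
  have hacyc := (mem_AK.1 hf).2
  rw [forestSet, Finset.mem_filter]
  refine ⟨Finset.mem_univ _, graphOf_isAcyclic hacyc, card_components hacyc htn, ?_⟩
  intro i j hi hj hreach
  have := reach_root_eq hacyc hreach
  rwa [rootOf_of_not_mem hacyc (not_mem_Kt.2 hi),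
    rootOf_of_not_mem hacyc (not_mem_Kt.2 hj)] at this

lemma graphOf_inj {t : ℕ} {f g : Fin n → Fin n} (hf : f ∈ AK (Kt n t))
    (hg : g ∈ AK (Kt n t)) (h : graphOf n t f = graphOf n t g) : f = g := by
  by_contra hne
  have hDne : (Finset.univ.filter (fun v => f v ≠ g v)).Nonempty := by
    rw [Finset.filter_nonempty_iff]
    by_contra hc
    push_neg at hc
    exact hne (funext fun v => by
      have := hc v (Finset.mem_univ v)
      simpa using this)
  obtain ⟨v, hvD, hvmin⟩ :=
    Finset.exists_min_image _ (rho (mem_AK.1 hf).2) hDne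
  rw [Finset.mem_filter] at hvD
  have hvne : f v ≠ g v := hvD.2
  have hvK : v ∈ Kt n t := by
    by_contra hc
    exact hvne (((mem_AK.1 hf).1 v hc).trans ((mem_AK.1 hg).1 v hc).symm)
  have hadj : (graphOf n t g).Adj v (f v) := h ▸ adj_graphOf (mem_AK.1 hf).2 hvK
  rcases adj_step (f := g) hadj with ⟨_, he⟩ | ⟨hK2, he⟩
  · exact hvne he
  · have hu : f (f v) ≠ g (f v) := by
      rw [← he]
      intro hc
      refine (mem_AK.1 hf).2 v hvK 2 (by omega) ?_
      rw [show (2:ℕ) = 1 + 1 from rfl, Function.iterate_add_apply]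
      simpa using hc
    have huD := hvmin (f v) (Finset.mem_filter.2 ⟨Finset.mem_univ _, hu⟩)
    have hs := rho_succ (mem_AK.1 hf).2 hvK
    omega

lemma graphOf_surj {t : ℕ} (htn : t ≤ n) {G : SimpleGraph (Fin n)}
    (hG : G ∈ forestSet n t) : ∃ f ∈ AK (Kt n t), graphOf n t f = G := by
  rw [forestSet, Finset.mem_filter] at hG
  obtain ⟨-, hac, hcard, hsep⟩ := hG
  have hroot : ∀ v : Fin n, ∃ r : Fin n, (r : ℕ) < t ∧ G.Reachable r v := by
    have hinj : Function.Injective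
        (fun r : {v : Fin n // (v : ℕ) < t} => G.connectedComponentMk r.1) := by
      rintro ⟨i, hi⟩ ⟨j, hj⟩ hij
      exact Subtype.ext (hsep i j hi hj (SimpleGraph.ConnectedComponent.eq.1 hij))
    have hcards : Fintype.card {v : Fin n // (v : ℕ) < t}
        = Fintype.card G.ConnectedComponent := by
      rw [Fintype.card_subtype, hcard]
      exact card_K0 htn
    have hsurj := ((Fintype.bijective_iff_injective_and_card _).2 ⟨hinj, hcards⟩).2
    intro v
    obtain ⟨r, hr⟩ := hsurj (G.connectedComponentMk v)
    exact ⟨r.1, r.2, SimpleGraph.ConnectedComponent.eq.1 hr⟩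
  choose r hr1 hr2 using hroot
  have hru : ∀ v s : Fin n, (s : ℕ) < t → G.Reachable s v → s = r v := fun v s hs hsv =>
    hsep s (r v) hs (hr1 v) (hsv.trans (hr2 v).symm)
  have hplen : ∀ {u w : Fin n} (p : G.Walk u w), p.IsPath → p.length = G.dist u w := by
    intro u w p hp
    obtain ⟨q, hq, hql⟩ := SimpleGraph.Reachable.exists_path_of_dist (⟨p⟩ : G.Reachable u w)
    have := hac.path_unique ⟨p, hp⟩ ⟨q, hq⟩
    rw [show p = q from congrArg Subtype.val this, hql]
  have hpex : ∀ v : Fin n, ∃ p : G.Walk v (r v), p.IsPath ∧ p.length = G.dist v (r v) :=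
    fun v => ((hr2 v).symm).exists_path_of_dist
  choose pv hpv1 hpv2 using hpex
  set f : Fin n → Fin n := fun v => if (v : ℕ) < t then v else (pv v).getVert 1 with hf
  have hrr : ∀ s : Fin n, (s : ℕ) < t → r s = s := fun s hs =>
    (hru s s hs (SimpleGraph.Reachable.refl s)).symm
  have hstep : ∀ v : Fin n, ¬ (v : ℕ) < t →
      G.Adj v (f v) ∧ G.dist (f v) (r (f v)) + 1 = G.dist v (r v) ∧ r (f v) = r v := by
    intro v hv
    have hvr : v ≠ r v := fun hc => hv (hc ▸ hr1 v)
    obtain ⟨u, hadj, q, hq⟩ := SimpleGraph.Walk.exists_eq_cons_of_ne hvr (pv v)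
    have hfv : f v = u := by
      rw [hf]
      dsimp only
      rw [if_neg hv, hq, SimpleGraph.Walk.getVert_cons_succ, SimpleGraph.Walk.getVert_zero]
    have hqpath : q.IsPath ∧ v ∉ q.support := by
      have := hpv1 v
      rw [hq, SimpleGraph.Walk.cons_isPath_iff] at this
      exact this
    have hrru : r u = r v := (hru u (r v) (hr1 v) ⟨q.reverse⟩).symm
    have hdu : G.dist u (r u) + 1 = G.dist v (r v) := by
      have hlen : (pv v).length = G.dist v (r v) := hpv2 v
      rw [hq, SimpleGraph.Walk.length_cons] at hlen
      have hql : q.length = G.dist u (r v) := hplen q hqpath.1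
      rw [hrru, ← hql]
      exact hlen
    rw [hfv]
    exact ⟨hadj, hdu, hrru⟩
  have hfAK : f ∈ AK (Kt n t) := by
    refine mem_AK.2 ⟨?_, ?_⟩
    · intro v hv
      rw [hf]
      dsimp only
      rw [if_pos (not_mem_Kt.1 hv)]
    · intro v hv j hj hcyc
      have horb : ∀ i, f^[i] v ∈ ((Kt n t : Finset (Fin n)) : Set (Fin n)) :=
        orbit_mem_of_cycle (fun w hw => by
          rw [hf]; dsimp only
          rw [if_pos (not_mem_Kt.1 (by simpa using hw))]) hj hcyc (by simpa using hv)
      have hdec : ∀ i, G.dist (f^[i] v) (r (f^[i] v)) + i = G.dist v (r v) := by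
        intro i
        induction i with
        | zero => simp
        | succ i ih =>
          have hiK : f^[i] v ∈ Kt n t := by simpa using horb i
          have := (hstep (f^[i] v) (by
            have := mem_Kt.1 hiK
            omega)).2.1
          rw [Function.iterate_succ_apply']
          omega
      have := hdec j
      rw [hcyc] at this
      omega
  refine ⟨f, hfAK, ?_⟩
  have hcore : ∀ a b : Fin n, G.Adj a b → G.dist b (r b) ≤ G.dist a (r a) →
      ¬ ((a : ℕ) < t) ∧ f a = b := by
    intro a b hab hdle
    have hrab : r a = r b :=
      hru b (r a) (hr1 a) ((hr2 a).trans hab.reachable)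
    have haK : ¬ (a : ℕ) < t := by
      intro ha
      have hda : G.dist a (r a) = 0 := by rw [hrr a ha, SimpleGraph.dist_self]
      have hdb : G.dist b (r b) = 0 := by omega
      have hbr : b = r b :=
        (SimpleGraph.Reachable.dist_eq_zero_iff (hr2 b).symm).1 hdb
      have hb : (b : ℕ) < t := by rw [hbr]; exact hr1 b
      exact hab.ne (hsep a b ha hb hab.reachable)
    have hnots : a ∉ (pv b).support := by
      intro hmem
      have hane : a ≠ b := (hab.ne).symm ∘ Eq.symm
      have hsplit := SimpleGraph.Walk.take_spec (pv b) hmem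
      have hlen : ((pv b).takeUntil a hmem).length + ((pv b).dropUntil a hmem).length
          = (pv b).length := by
        rw [← SimpleGraph.Walk.length_append, hsplit]
      have htl : 0 < ((pv b).takeUntil a hmem).length := by
        rcases Nat.eq_zero_or_pos ((pv b).takeUntil a hmem).length with h0 | h0
        · exact absurd (SimpleGraph.Walk.eq_of_length_eq_zero h0) (fun hc => hane hc.symm)
        · exact h0
      have hdrop : ((pv b).dropUntil a hmem).IsPath := (hpv1 b).dropUntil hmem
      have hdl : ((pv b).dropUntil a hmem).length = G.dist a (r b) := hplen _ hdrop
      have hpl : (pv b).length = G.dist b (r b) := hpv2 b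
      rw [hrab] at hdle
      omega
    have hw : (SimpleGraph.Walk.cons hab (pv b)).IsPath :=
      SimpleGraph.Walk.IsPath.cons (hpv1 b) hnots
    have hrba : r b = r a := hrab.symm
    have hw'path : ((SimpleGraph.Walk.cons hab (pv b)).copy rfl hrba).IsPath := by
      rwa [SimpleGraph.Walk.isPath_copy]
    have hpeq := hac.path_unique ⟨pv a, hpv1 a⟩
      ⟨(SimpleGraph.Walk.cons hab (pv b)).copy rfl hrba, hw'path⟩
    have hveq : pv a = (SimpleGraph.Walk.cons hab (pv b)).copy rfl hrba :=
      congrArg Subtype.val hpeq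
    refine ⟨haK, ?_⟩
    rw [hf]
    dsimp only
    rw [if_neg haK, hveq, SimpleGraph.Walk.getVert_copy,
      SimpleGraph.Walk.getVert_cons_succ, SimpleGraph.Walk.getVert_zero]
  ext a b
  constructor
  · intro h
    rcases adj_step (f := f) h with ⟨haK, rfl⟩ | ⟨hbK, rfl⟩
    · exact (hstep a (by have := mem_Kt.1 haK; omega)).1
    · exact ((hstep b (by have := mem_Kt.1 hbK; omega)).1).symm
  · intro hab
    rcases le_total (G.dist b (r b)) (G.dist a (r a)) with hle | hle
    · obtain ⟨haK, hfa⟩ := hcore a b hab hle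
      exact graphOf_adj.2 ⟨hab.ne, Or.inl ⟨mem_Kt.2 (by omega), hfa.symm⟩⟩
    · obtain ⟨hbK, hfb⟩ := hcore b a hab.symm hle
      exact graphOf_adj.2 ⟨hab.ne, Or.inr ⟨mem_Kt.2 (by omega), hfb.symm⟩⟩

lemma card_forestSet (n t : ℕ) (htn : t ≤ n) :
    (forestSet n t).card = aF n (n - t) := by
  have h1 : (AK (Kt n t)).card = (forestSet n t).card :=
    Finset.card_bij (fun f _ => graphOf n t f)
      (fun f hf => graphOf_mem_forestSet htn hf)
      (fun f hf g hg h => graphOf_inj hf hg h)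
      (fun G hG => by
        obtain ⟨f, hf, hfe⟩ := graphOf_surj htn hG
        exact ⟨f, hf, hfe⟩)
  rw [← h1, aF]
  exact AK_card_eq (by rw [card_Kt htn, card_K0 (by omega)])

end Cayley


/-- generalized Cayley formula: the number of forests on `[n]`
with exactly `t` tree components in which the vertices `1, …, t` all lie in
different tree components equals `t · n^{n-t-1}`, for `1 ≤ t ≤ n`. -/
theorem stmt0 (n t : ℕ) (ht1 : 1 ≤ t) (htn : t ≤ n) :
    ((forestSet n t).card : ℝ) = (t : ℝ) * (n : ℝ) ^ ((n : ℤ) - (t : ℤ) - 1) := by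
  have hn : 1 ≤ n := le_trans ht1 htn
  rw [Cayley.card_forestSet n t htn]
  rcases eq_or_lt_of_le htn with rfl | hlt
  · rw [Nat.sub_self, Cayley.aF_zero]
    rw [show (t : ℤ) - (t : ℤ) - 1 = -1 by ring, zpow_neg, zpow_one]
    have ht0 : (t : ℝ) ≠ 0 := by
      have : 0 < t := ht1
      positivity
    rw [Nat.cast_one, mul_inv_cancel₀ ht0]
  · have hk1 : 1 ≤ n - t := by omega
    have hkn : n - t ≤ n := by omega
    rw [Cayley.aF_real hn (n - t) hkn hk1]
    have h2 : (n : ℝ) - ((n - t : ℕ) : ℝ) = (t : ℝ) := by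
      rw [Nat.cast_sub htn]; ring
    rw [h2]
    have h3 : ((n : ℤ) - (t : ℤ) - 1) = ((n - t - 1 : ℕ) : ℤ) := by omega
    rw [h3, zpow_natCast]
end
end

section
/- For a Galton–Watson tree T with offspring distribution Poisson(1), the probability that T has exactly k vertices equals e^{−k} k^{k−1} / k!, for every positive integer k. -/
open scoped Classical BigOperators
open Finset Filter

noncomputable section

namespace GW1
open List

/-! ### Lex order facts on `List ℕ` -/

lemma lt_append {l t : List ℕ} (ht : t ≠ []) : l < l ++ t := by
  induction l with
  | nil =>
    cases t with
    | nil => exact absurd rfl ht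
    | cons a t => exact List.nil_lt_cons a t
  | cons a l ih => exact List.Lex.cons ih

lemma lt_concat (l : List ℕ) (i : ℕ) : l < l ++ [i] := lt_append (by simp)

lemma concat_lt_concat {q r : List ℕ} {i j : ℕ} (h : i < j) :
    q ++ i :: r < q ++ [j] :=
  List.Lex.append_left _ (List.Lex.rel h) q

lemma lex_append_of_not_prefix : ∀ {a b : List ℕ}, List.Lex (· < ·) a b → ¬ a <+: b →
    ∀ r, List.Lex (· < ·) (a ++ r) b := by
  intro a b h
  induction h with
  | nil => intro hp; exact absurd (List.nil_prefix) hp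
  | @cons a l1 l2 h ih =>
    intro hp r
    exact List.Lex.cons (ih (fun hq => hp (List.cons_prefix_cons.2 ⟨rfl, hq⟩)) r)
  | @rel a l1 b l2 h =>
    intro _ r
    exact List.Lex.rel h

lemma append_lt_of_not_prefix {a b : List ℕ} (h : a < b) (hp : ¬ a <+: b) (r : List ℕ) :
    a ++ r < b :=
  lex_append_of_not_prefix h hp r

end GW1
namespace GW1

/-! ### Plane tree basics -/

variable {T : Finset (List ℕ)}

lemma prefix_mem (hT : IsPlaneTree T) {l r : List ℕ} (h : l ++ r ∈ T) : l ∈ T := by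
  induction r using List.reverseRecOn generalizing l with
  | nil => simpa using h
  | append_singleton r i ih =>
    rw [← List.append_assoc] at h
    exact ih (hT.2 _ _ h).1

lemma mem_of_isPrefix (hT : IsPlaneTree T) {q x : List ℕ} (hp : q <+: x) (hx : x ∈ T) :
    q ∈ T := by
  obtain ⟨r, rfl⟩ := hp
  exact prefix_mem hT hx

lemma downward_closed_eq (S : Finset ℕ) (h : ∀ i ∈ S, ∀ j < i, j ∈ S) (j : ℕ) :
    j ∈ S ↔ j < S.card := by
  constructor
  · intro hj
    have hsub : Finset.range (j + 1) ⊆ S := by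
      intro i hi
      rcases Nat.lt_succ_iff_lt_or_eq.1 (Finset.mem_range.1 hi) with hi' | rfl
      · exact h j hj i hi'
      · exact hj
    have := Finset.card_le_card hsub
    simpa using this.trans_lt' (by simp)
  · intro hj
    by_contra hjS
    have hsub : S ⊆ Finset.range j := by
      intro i hi
      rw [Finset.mem_range]
      rcases lt_or_ge i j with h' | h'
      · exact h'
      · rcases Nat.eq_or_lt_of_le h' with rfl | h''
        · exact absurd hi hjS
        · exact absurd (h i hi j h'') hjS
    have := Finset.card_le_card hsub
    simp only [Finset.card_range] at this
    omega

lemma concat_mem_iff (hT : IsPlaneTree T) (l : List ℕ) (j : ℕ) :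
    l ++ [j] ∈ T ↔ j < childCount T l := by
  classical
  set C := T.filter (fun x => ∃ i : ℕ, x = l ++ [i]) with hC
  set I := C.image (fun x => x.getLastD 0) with hI
  have hmemI : ∀ j : ℕ, j ∈ I ↔ l ++ [j] ∈ T := by
    intro j
    constructor
    · intro hj
      obtain ⟨x, hx, hxj⟩ := Finset.mem_image.1 hj
      obtain ⟨hxT, i, rfl⟩ := Finset.mem_filter.1 hx
      rw [List.getLastD_concat] at hxj
      rwa [hxj] at hxT
    · intro hj
      exact Finset.mem_image.2 ⟨l ++ [j], Finset.mem_filter.2 ⟨hj, j, rfl⟩,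
        List.getLastD_concat⟩
  have hcardI : I.card = C.card := by
    apply Finset.card_image_of_injOn
    intro x hx y hy hxy
    obtain ⟨-, i, rfl⟩ := Finset.mem_filter.1 hx
    obtain ⟨-, i', rfl⟩ := Finset.mem_filter.1 hy
    simp only [List.getLastD_concat] at hxy
    rw [hxy]
  have hdc : ∀ i ∈ I, ∀ j < i, j ∈ I := by
    intro i hi j hj
    rw [hmemI] at hi ⊢
    exact (hT.2 l i hi).2 j hj
  rw [← hmemI, downward_closed_eq I hdc, hcardI]
  rfl

lemma sum_childCount (hT : IsPlaneTree T) (A : Finset (List ℕ)) (hA : A ⊆ T) :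
    ∑ x ∈ A, childCount T x =
      (T.filter (fun y => y ≠ [] ∧ y.dropLast ∈ A)).card := by
  classical
  rw [Finset.card_eq_sum_card_fiberwise
    (f := fun y => y.dropLast) (t := A) (fun y hy => (Finset.mem_filter.1 hy).2.2)]
  apply Finset.sum_congr rfl
  intro x hx
  unfold childCount
  congr 1
  ext y
  simp only [Finset.mem_filter, ne_eq]
  constructor
  · rintro ⟨hyT, i, rfl⟩
    refine ⟨⟨hyT, by simp, ?_⟩, ?_⟩ <;> rw [List.dropLast_concat]
    exact hx
  · rintro ⟨⟨hyT, hne, -⟩, rfl⟩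
    exact ⟨hyT, y.getLast hne, (List.dropLast_append_getLast hne).symm⟩

end GW1
namespace GW1

/-! ### Enumeration of a finite set of lists in lex order -/

variable {T : Finset (List ℕ)} {k : ℕ}

/-- The degree sequence of a plane tree in lex (DFS) order. -/
def degSeq (T : Finset (List ℕ)) (hcard : T.card = k) : Fin k → ℕ :=
  fun i => childCount T (T.orderEmbOfFin hcard i)

lemma enum_mem (hcard : T.card = k) (i : Fin k) : T.orderEmbOfFin hcard i ∈ T :=
  Finset.orderEmbOfFin_mem T hcard i

lemma exists_enum (hcard : T.card = k) {x : List ℕ} (hx : x ∈ T) :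
    ∃ i, T.orderEmbOfFin hcard i = x := by
  have := Finset.range_orderEmbOfFin T hcard
  have hx' : x ∈ Set.range (T.orderEmbOfFin hcard) := by rw [this]; exact hx
  exact hx'

lemma enum_zero (hcard : T.card = k) (hT : [] ∈ T) (hk : 0 < k) :
    T.orderEmbOfFin hcard ⟨0, hk⟩ = [] := by
  rw [Finset.orderEmbOfFin_zero hcard hk]
  refine le_antisymm (Finset.min'_le _ _ hT) (not_lt.1 (List.not_lt_nil _))

lemma filter_le_enum_eq_image (hcard : T.card = k) (j : Fin k) :
    T.filter (· ≤ T.orderEmbOfFin hcard j) =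
      (Finset.univ.filter (· ≤ j)).image (T.orderEmbOfFin hcard) := by
  ext x
  simp only [Finset.mem_filter, Finset.mem_image, Finset.mem_univ, true_and]
  constructor
  · rintro ⟨hxT, hxj⟩
    obtain ⟨i, rfl⟩ := exists_enum hcard hxT
    exact ⟨i, (T.orderEmbOfFin hcard).le_iff_le.1 hxj, rfl⟩
  · rintro ⟨i, hij, rfl⟩
    exact ⟨enum_mem hcard i, (T.orderEmbOfFin hcard).le_iff_le.2 hij⟩

lemma filter_lt_enum_eq_image (hcard : T.card = k) (j : Fin k) :
    T.filter (· < T.orderEmbOfFin hcard j) =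
      (Finset.univ.filter (· < j)).image (T.orderEmbOfFin hcard) := by
  ext x
  simp only [Finset.mem_filter, Finset.mem_image, Finset.mem_univ, true_and]
  constructor
  · rintro ⟨hxT, hxj⟩
    obtain ⟨i, rfl⟩ := exists_enum hcard hxT
    exact ⟨i, (T.orderEmbOfFin hcard).lt_iff_lt.1 hxj, rfl⟩
  · rintro ⟨i, hij, rfl⟩
    exact ⟨enum_mem hcard i, (T.orderEmbOfFin hcard).lt_iff_lt.2 hij⟩

lemma card_filter_lt_enum (hcard : T.card = k) (j : Fin k) :
    (T.filter (· < T.orderEmbOfFin hcard j)).card = j := by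
  rw [filter_lt_enum_eq_image hcard j,
    Finset.card_image_of_injective _ (T.orderEmbOfFin hcard).injective,
    show Finset.univ.filter (· < j) = Finset.Iio j by ext i; simp, Fin.card_Iio]

lemma card_filter_le_enum (hcard : T.card = k) (j : Fin k) :
    (T.filter (· ≤ T.orderEmbOfFin hcard j)).card = j + 1 := by
  rw [filter_le_enum_eq_image hcard j,
    Finset.card_image_of_injective _ (T.orderEmbOfFin hcard).injective,
    show Finset.univ.filter (· ≤ j) = Finset.Iic j by ext i; simp, Fin.card_Iic]

lemma sum_filter_le_enum (hcard : T.card = k) (j : Fin k) (f : List ℕ → ℕ) :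
    ∑ x ∈ T.filter (· ≤ T.orderEmbOfFin hcard j), f x =
      ∑ i ∈ Finset.univ.filter (· ≤ j), f (T.orderEmbOfFin hcard i) := by
  rw [filter_le_enum_eq_image hcard j,
    Finset.sum_image (fun a _ b _ h => (T.orderEmbOfFin hcard).injective h)]

lemma sum_filter_lt_enum (hcard : T.card = k) (j : Fin k) (f : List ℕ → ℕ) :
    ∑ x ∈ T.filter (· < T.orderEmbOfFin hcard j), f x =
      ∑ i ∈ Finset.univ.filter (· < j), f (T.orderEmbOfFin hcard i) := by
  rw [filter_lt_enum_eq_image hcard j,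
    Finset.sum_image (fun a _ b _ h => (T.orderEmbOfFin hcard).injective h)]

/-- The index of `x` in the enumeration is the number of smaller elements. -/
lemma enum_index (hcard : T.card = k) {x : List ℕ} (hx : x ∈ T)
    (h : (T.filter (· < x)).card < k) :
    T.orderEmbOfFin hcard ⟨(T.filter (· < x)).card, h⟩ = x := by
  obtain ⟨i, rfl⟩ := exists_enum hcard hx
  congr 1
  exact Fin.ext (card_filter_lt_enum hcard i)

end GW1
namespace GW1

/-- The Łukasiewicz path condition. -/
def Good (k : ℕ) (c : Fin k → ℕ) : Prop :=
  ∀ m : ℕ, m < k → m ≤ ∑ i ∈ Finset.univ.filter (fun i : Fin k => (i : ℕ) < m), c i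

variable {T : Finset (List ℕ)} {k : ℕ}

lemma univ_eq_image_enum (hcard : T.card = k) :
    T = Finset.univ.image (T.orderEmbOfFin hcard) := by
  ext x
  simp only [Finset.mem_image, Finset.mem_univ, true_and]
  exact ⟨fun hx => exists_enum hcard hx, by rintro ⟨i, rfl⟩; exact enum_mem hcard i⟩

lemma dropLast_mem (hT : IsPlaneTree T) {y : List ℕ} (hy : y ∈ T) (hne : y ≠ []) :
    y.dropLast ∈ T := by
  have h := List.dropLast_append_getLast hne
  rw [← h] at hy
  exact (hT.2 _ _ hy).1

lemma dropLast_lt {y : List ℕ} (hne : y ≠ []) : y.dropLast < y := by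
  conv_rhs => rw [← List.dropLast_append_getLast hne]
  exact lt_concat _ _

lemma sum_degSeq (hT : IsPlaneTree T) (hcard : T.card = k) :
    ∑ i, degSeq T hcard i = k - 1 := by
  unfold degSeq
  rw [show (∑ i, childCount T (T.orderEmbOfFin hcard i)) = ∑ x ∈ T, childCount T x from
    Finset.sum_bij (fun i _ => T.orderEmbOfFin hcard i)
      (fun i _ => enum_mem hcard i)
      (fun a _ b _ h => (T.orderEmbOfFin hcard).injective h)
      (fun x hx => ⟨(exists_enum hcard hx).choose, Finset.mem_univ _,
        (exists_enum hcard hx).choose_spec⟩)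
      (fun i _ => rfl)]
  rw [sum_childCount hT T (le_refl _)]
  have : T.filter (fun y => y ≠ [] ∧ y.dropLast ∈ T) = T.erase [] := by
    ext y
    simp only [Finset.mem_filter, Finset.mem_erase, ne_eq]
    constructor
    · rintro ⟨hyT, hne, -⟩; exact ⟨hne, hyT⟩
    · rintro ⟨hne, hyT⟩; exact ⟨hyT, hne, dropLast_mem hT hyT hne⟩
  rw [this, Finset.card_erase_of_mem hT.1, hcard]

lemma good_degSeq (hT : IsPlaneTree T) (hcard : T.card = k) :
    Good k (degSeq T hcard) := by
  intro m hm
  rcases Nat.eq_zero_or_pos m with rfl | hm0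
  · simp
  have hk : 0 < k := lt_trans hm0 hm
  set e := T.orderEmbOfFin hcard with he
  set jm : Fin k := ⟨m, hm⟩ with hjm
  have hfeq : Finset.univ.filter (fun i : Fin k => (i : ℕ) < m) =
      Finset.univ.filter (· < jm) := by
    apply Finset.filter_congr; intro i _; simp [Fin.lt_def, hjm]
  rw [hfeq]
  unfold degSeq
  rw [← sum_filter_lt_enum hcard jm (childCount T),
    sum_childCount hT _ (Finset.filter_subset _ _)]
  set V := T.filter (· < e jm) with hV
  set z : Fin k := ⟨0, hk⟩ with hz
  have hsub : (Finset.univ.filter (fun j : Fin k => z < j ∧ j ≤ jm)).image e ⊆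
      T.filter (fun y => y ≠ [] ∧ y.dropLast ∈ V) := by
    intro y hy
    obtain ⟨j, hj, rfl⟩ := by
      simpa only [Finset.mem_image, Finset.mem_filter, Finset.mem_univ, true_and] using hy
    have hyT : e j ∈ T := enum_mem hcard j
    have hne : e j ≠ [] := by
      intro h0
      have : e j = e z := by rw [h0, enum_zero hcard hT.1 hk]
      have := (T.orderEmbOfFin hcard).injective this
      rw [this] at hj
      exact lt_irrefl _ hj.1
    refine Finset.mem_filter.2 ⟨hyT, hne, Finset.mem_filter.2
      ⟨dropLast_mem hT hyT hne, ?_⟩⟩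
    calc (e j).dropLast < e j := dropLast_lt hne
    _ ≤ e jm := (T.orderEmbOfFin hcard).le_iff_le.2 hj.2
  have hcardW : ((Finset.univ.filter (fun j : Fin k => z < j ∧ j ≤ jm)).image e).card = m := by
    rw [Finset.card_image_of_injective _ (T.orderEmbOfFin hcard).injective,
      show Finset.univ.filter (fun j : Fin k => z < j ∧ j ≤ jm) = Finset.Ioc z jm by
        ext i; simp [and_comm], Fin.card_Ioc]
    simp [hz, hjm]
  calc m = _ := hcardW.symm
  _ ≤ _ := Finset.card_le_card hsub

end GW1
namespace GW1

variable {T T' : Finset (List ℕ)} {k : ℕ}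

lemma degSeq_inj_aux (hT : IsPlaneTree T) (hT' : IsPlaneTree T')
    (hcard : T.card = k) (hcard' : T'.card = k)
    (h : degSeq T hcard = degSeq T' hcard') {y : List ℕ}
    (hy : y ∈ T) (hy' : y ∉ T') (hmin : ∀ x, x < y → (x ∈ T ↔ x ∈ T')) : False := by
  have hne : y ≠ [] := fun h0 => hy' (h0 ▸ hT'.1)
  set p := y.dropLast with hp
  have hpT : p ∈ T := dropLast_mem hT hy hne
  have hpy : p < y := dropLast_lt hne
  have hpT' : p ∈ T' := (hmin p hpy).1 hpT
  have hfilter : T.filter (· < p) = T'.filter (· < p) := by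
    ext x
    simp only [Finset.mem_filter]
    constructor
    · rintro ⟨hx, hxp⟩; exact ⟨(hmin x (lt_trans hxp hpy)).1 hx, hxp⟩
    · rintro ⟨hx, hxp⟩; exact ⟨(hmin x (lt_trans hxp hpy)).2 hx, hxp⟩
  have hjk : (T.filter (· < p)).card < k := by
    have hsub : T.filter (· < p) ⊆ T.erase y := by
      intro x hx
      obtain ⟨hxT, hxp⟩ := Finset.mem_filter.1 hx
      exact Finset.mem_erase.2 ⟨ne_of_lt (lt_trans hxp hpy), hxT⟩
    calc (T.filter (· < p)).card ≤ (T.erase y).card := Finset.card_le_card hsub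
    _ < T.card := Finset.card_erase_lt_of_mem hy
    _ = k := hcard
  set j : Fin k := ⟨(T.filter (· < p)).card, hjk⟩ with hj
  have hep : T.orderEmbOfFin hcard j = p := enum_index hcard hpT hjk
  have hjk' : (T'.filter (· < p)).card < k := by rw [← hfilter]; exact hjk
  have hep' : T'.orderEmbOfFin hcard' j = p := by
    have := enum_index hcard' hpT' hjk'
    convert this using 2
    exact Fin.ext (by simp only [hj]; rw [hfilter])
  have hcc : childCount T p = childCount T' p := by
    have h1 : degSeq T hcard j = degSeq T' hcard' j := by rw [h]
    unfold degSeq at h1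
    rwa [hep, hep'] at h1
  set t := y.getLast hne with ht
  have hyt : p ++ [t] = y := List.dropLast_append_getLast hne
  have h2 : t < childCount T p := (concat_mem_iff hT p t).1 (hyt ▸ hy)
  have h3 : p ++ [t] ∈ T' := (concat_mem_iff hT' p t).2 (hcc ▸ h2)
  exact hy' (hyt ▸ h3)

lemma degSeq_injective (hT : IsPlaneTree T) (hT' : IsPlaneTree T')
    (hcard : T.card = k) (hcard' : T'.card = k)
    (h : degSeq T hcard = degSeq T' hcard') : T = T' := by
  by_contra hne
  have hD : ((T \ T') ∪ (T' \ T)).Nonempty := by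
    rw [Finset.nonempty_iff_ne_empty]
    intro h0
    apply hne
    have h1 : T \ T' = ∅ := Finset.union_eq_empty.1 h0 |>.1
    have h2 : T' \ T = ∅ := Finset.union_eq_empty.1 h0 |>.2
    exact Finset.Subset.antisymm (Finset.sdiff_eq_empty_iff_subset.1 h1)
      (Finset.sdiff_eq_empty_iff_subset.1 h2)
  set y := ((T \ T') ∪ (T' \ T)).min' hD with hy
  have hymem := ((T \ T') ∪ (T' \ T)).min'_mem hD
  have hmin : ∀ x, x < y → (x ∈ T ↔ x ∈ T') := by
    intro x hx
    by_contra hiff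
    have hxD : x ∈ (T \ T') ∪ (T' \ T) := by
      simp only [Finset.mem_union, Finset.mem_sdiff]
      tauto
    exact absurd (Finset.min'_le _ _ hxD) (not_le.2 hx)
  rcases Finset.mem_union.1 hymem with hmem | hmem
  · obtain ⟨h1, h2⟩ := Finset.mem_sdiff.1 hmem
    exact degSeq_inj_aux hT hT' hcard hcard' h h1 h2 hmin
  · obtain ⟨h1, h2⟩ := Finset.mem_sdiff.1 hmem
    exact degSeq_inj_aux hT' hT hcard' hcard h.symm h1 h2 (fun x hx => (hmin x hx).symm)

end GW1
namespace GW1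

variable {T : Finset (List ℕ)} {k : ℕ}

lemma sum_lt_succ (c : Fin k → ℕ) {m : ℕ} (hm : m < k) :
    ∑ i ∈ Finset.univ.filter (fun i : Fin k => (i : ℕ) < m + 1), c i =
      (∑ i ∈ Finset.univ.filter (fun i : Fin k => (i : ℕ) < m), c i) + c ⟨m, hm⟩ := by
  have : Finset.univ.filter (fun i : Fin k => (i : ℕ) < m + 1) =
      insert ⟨m, hm⟩ (Finset.univ.filter (fun i : Fin k => (i : ℕ) < m)) := by
    ext i
    simp only [Finset.mem_filter, Finset.mem_univ, true_and, Finset.mem_insert]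
    constructor
    · intro h
      rcases Nat.lt_succ_iff_lt_or_eq.1 h with h | h
      · exact Or.inr h
      · exact Or.inl (Fin.ext h)
    · rintro (rfl | h)
      · exact Nat.lt_succ_self m
      · exact Nat.lt_succ_of_lt h
  rw [this, Finset.sum_insert (by simp), add_comm]

/-- The pending stack after visiting the first `j+1` vertices. -/
def pendSet (T : Finset (List ℕ)) (hcard : T.card = k) (j : Fin k) : Finset (List ℕ) :=
  T.filter (fun y => ¬(y ≤ T.orderEmbOfFin hcard j) ∧ y ≠ [] ∧
    y.dropLast ∈ T ∧ y.dropLast ≤ T.orderEmbOfFin hcard j)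

lemma card_pendSet (hT : IsPlaneTree T) (hcard : T.card = k) (j : Fin k) :
    (pendSet T hcard j).card + (j : ℕ) =
      ∑ i ∈ Finset.univ.filter (fun i : Fin k => (i : ℕ) < (j : ℕ) + 1), degSeq T hcard i := by
  classical
  set e := T.orderEmbOfFin hcard with he
  have h1 : Finset.univ.filter (fun i : Fin k => (i : ℕ) < (j : ℕ) + 1) =
      Finset.univ.filter (· ≤ j) := by
    apply Finset.filter_congr; intro i _
    rw [Fin.le_def]
    omega
  rw [h1]
  have h2 : ∑ i ∈ Finset.univ.filter (· ≤ j), degSeq T hcard i =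
      ∑ x ∈ T.filter (· ≤ e j), childCount T x :=
    (sum_filter_le_enum hcard j (childCount T)).symm
  rw [h2, sum_childCount hT _ (Finset.filter_subset _ _)]
  set s := T.filter (fun y => y ≠ [] ∧ y.dropLast ∈ T.filter (· ≤ e j)) with hs
  have hsplit : s.filter (fun y => ¬ (y ≤ e j)) = pendSet T hcard j := by
    ext y
    simp only [hs, pendSet, Finset.mem_filter, ne_eq, ← he]
    tauto
  have hsplit2 : s.filter (fun y => y ≤ e j) = (T.filter (· ≤ e j)).erase [] := by
    ext y
    simp only [hs, Finset.mem_filter, Finset.mem_erase, ne_eq]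
    constructor
    · rintro ⟨⟨hyT, hyne, -⟩, hyle⟩
      exact ⟨hyne, hyT, hyle⟩
    · rintro ⟨hyne, hyT, hyle⟩
      exact ⟨⟨hyT, hyne, ⟨dropLast_mem hT hyT hyne,
        (dropLast_lt hyne).le.trans hyle⟩⟩, hyle⟩
  have hadd := Finset.card_filter_add_card_filter_not (s := s)
    (p := fun y => y ≤ e j)
  rw [hsplit, hsplit2] at hadd
  have hmem0 : ([] : List ℕ) ∈ T.filter (· ≤ e j) :=
    Finset.mem_filter.2 ⟨hT.1, not_lt.1 (List.not_lt_nil _)⟩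
  have hce : ((T.filter (· ≤ e j)).erase []).card = (j : ℕ) := by
    rw [Finset.card_erase_of_mem hmem0, card_filter_le_enum hcard j]
    simp
  omega

lemma next_mem_pendSet (hT : IsPlaneTree T) (hcard : T.card = k) {j m : Fin k}
    (hm : (m : ℕ) = (j : ℕ) + 1) : T.orderEmbOfFin hcard m ∈ pendSet T hcard j := by
  set e := T.orderEmbOfFin hcard with he
  have hjm : j < m := by rw [Fin.lt_def]; omega
  have hem : e j < e m := (T.orderEmbOfFin hcard).lt_iff_lt.2 hjm
  have hne : e m ≠ [] := by
    intro h0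
    have h1 : e m ≤ e j := by rw [h0]; exact not_lt.1 (List.not_lt_nil _)
    exact absurd ((T.orderEmbOfFin hcard).le_iff_le.1 h1) (not_le.2 hjm)
  have hdT : (e m).dropLast ∈ T := dropLast_mem hT (enum_mem hcard m) hne
  have hdle : (e m).dropLast ≤ e j := by
    obtain ⟨i, hi⟩ := exists_enum hcard hdT
    have h1 : e i < e m := by rw [hi]; exact dropLast_lt hne
    have h2 : i < m := (T.orderEmbOfFin hcard).lt_iff_lt.1 h1
    have h3 : i ≤ j := by rw [Fin.le_def]; rw [Fin.lt_def] at h2; omega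
    rw [← hi]
    exact (T.orderEmbOfFin hcard).le_iff_le.2 h3
  exact Finset.mem_filter.2 ⟨enum_mem hcard m, not_le.2 hem, hne, hdT, hdle⟩

/-- The descendant lemma: if the Łukasiewicz walk returns to level `p` at time `p`,
every later vertex is a descendant of the `p`-th vertex. -/
lemma descend (hT : IsPlaneTree T) (hcard : T.card = k) {p m : Fin k}
    (hp : ∑ i ∈ Finset.univ.filter (fun i : Fin k => (i : ℕ) < (p : ℕ)), degSeq T hcard i
      = (p : ℕ))
    (hpm : p ≤ m) : T.orderEmbOfFin hcard p <+: T.orderEmbOfFin hcard m := by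
  classical
  set e := T.orderEmbOfFin hcard with he
  set q := e p with hq
  set E := T.filter (fun y => q <+: y ∧ y ≠ q) with hE
  have hkey : ∀ n : ℕ, ∀ m : Fin k, (m : ℕ) = (p : ℕ) + n →
      (q <+: e m ∧ pendSet T hcard m ⊆ E) := by
    intro n
    induction n with
    | zero =>
      intro m hm
      have hmp : m = p := Fin.ext (by omega)
      subst hmp
      refine ⟨List.prefix_refl _, ?_⟩
      have hchild : T.filter (fun y => ∃ i : ℕ, y = q ++ [i]) = pendSet T hcard m := by
        apply Finset.eq_of_subset_of_card_le
        · intro y hy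
          obtain ⟨hyT, i, rfl⟩ := Finset.mem_filter.1 hy
          refine Finset.mem_filter.2 ⟨hyT, not_le.2 (lt_concat q i), by simp, ?_, ?_⟩
          · rw [List.dropLast_concat]; exact enum_mem hcard m
          · rw [List.dropLast_concat]
        · have h1 := card_pendSet hT hcard m
          rw [sum_lt_succ (degSeq T hcard) m.2, Fin.eta, hp] at h1
          have h2 : (pendSet T hcard m).card = degSeq T hcard m := by omega
          rw [h2]
          have h3 : degSeq T hcard m = (T.filter (fun y => ∃ i : ℕ, y = q ++ [i])).card := rfl
          omega
      intro y hy
      rw [← hchild] at hy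
      obtain ⟨hyT, i, rfl⟩ := Finset.mem_filter.1 hy
      exact Finset.mem_filter.2 ⟨hyT, ⟨[i], rfl⟩, by simp⟩
    | succ n ih =>
      intro m hm
      have hmk' : (p : ℕ) + n < k := by have := m.2; omega
      set m' : Fin k := ⟨(p : ℕ) + n, hmk'⟩ with hm'
      obtain ⟨ih1, ih2⟩ := ih m' rfl
      have hm'v : (m' : ℕ) = (p : ℕ) + n := rfl
      have hm'm : m' < m := by rw [Fin.lt_def]; omega
      have hm'm2 : m' ≤ m := le_of_lt hm'm
      have hnext : e m ∈ pendSet T hcard m' := next_mem_pendSet hT hcard (by omega)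
      have hEm := ih2 hnext
      obtain ⟨-, hpref, hneq⟩ := Finset.mem_filter.1 hEm
      refine ⟨hpref, ?_⟩
      intro y hy
      obtain ⟨hyT, hyle, hyne, hdT, hdle⟩ := Finset.mem_filter.1 hy
      by_cases hc : y.dropLast ≤ e m'
      · apply ih2
        refine Finset.mem_filter.2 ⟨hyT, ?_, hyne, hdT, hc⟩
        intro hyle'
        exact hyle (le_trans hyle' ((T.orderEmbOfFin hcard).le_iff_le.2 hm'm2))
      · obtain ⟨i, hi⟩ := exists_enum hcard hdT
        have h1 : i ≤ m := (T.orderEmbOfFin hcard).le_iff_le.1 (by rw [hi]; exact hdle)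
        have h2 : ¬ i ≤ m' := fun h => hc (by rw [← hi]; exact (T.orderEmbOfFin hcard).le_iff_le.2 h)
        have h3 : i = m := by
          apply Fin.ext
          rw [Fin.le_def] at h1 h2
          omega
        have hdm : y.dropLast = e m := by rw [← hi, h3]
        have hqy : q <+: y := by
          have hpref' : q <+: y.dropLast := by rw [hdm]; exact hpref
          exact hpref'.trans (List.dropLast_prefix y)
        refine Finset.mem_filter.2 ⟨hyT, hqy, ?_⟩
        intro hyq
        have h4 : y.dropLast < y := dropLast_lt hyne
        have h5 : q ≤ e m' := (T.orderEmbOfFin hcard).le_iff_le.2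
          (show p ≤ m' by rw [Fin.le_def]; omega)
        have h6 : e m' < e m := (T.orderEmbOfFin hcard).lt_iff_lt.2 hm'm
        rw [hdm, hyq] at h4
        exact absurd (lt_trans (lt_of_lt_of_le h4 h5) h6) (lt_irrefl _)
  exact (hkey ((m : ℕ) - (p : ℕ)) m (by rw [Fin.le_def] at hpm; omega)).1

end GW1
namespace GW1

def psum (k : ℕ) (c : Fin k → ℕ) (m : ℕ) : ℕ :=
  ∑ j ∈ Finset.range m, if h : j < k then c ⟨j, h⟩ else 0

lemma psum_succ (k : ℕ) (c : Fin k → ℕ) (m : ℕ) :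
    psum k c (m + 1) = psum k c m + (if h : m < k then c ⟨m, h⟩ else 0) :=
  Finset.sum_range_succ _ _

lemma psum_eq (k : ℕ) (c : Fin k → ℕ) (m : ℕ) :
    psum k c m = ∑ i ∈ Finset.univ.filter (fun i : Fin k => (i : ℕ) < m), c i := by
  induction m with
  | zero => simp [psum]
  | succ m ih =>
    rw [psum_succ, ih]
    by_cases h : m < k
    · rw [dif_pos h, sum_lt_succ c h]
    · rw [dif_neg h, add_zero]
      apply Finset.sum_congr _ (fun _ _ => rfl)
      apply Finset.filter_congr
      intro i _
      have := i.2
      omega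

theorem degSeq_surjective : ∀ k : ℕ, 1 ≤ k → ∀ c : Fin k → ℕ,
    (∑ i, c i = k - 1) → Good k c →
    ∃ (T : Finset (List ℕ)) (hT : IsPlaneTree T) (hcard : T.card = k),
      degSeq T hcard = c := by
  intro k
  induction k using Nat.strong_induction_on with
  | _ k IH =>
  intro hk c hsum hgood
  rcases Nat.lt_or_ge k 2 with hk2 | hk2
  · -- base case k = 1
    have hk1 : k = 1 := by omega
    subst hk1
    have hpl : IsPlaneTree {[]} := by
      refine ⟨Finset.mem_singleton_self [], ?_⟩
      intro l i hli
      exfalso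
      simpa using Finset.mem_singleton.1 hli
    refine ⟨{[]}, hpl, by simp, ?_⟩
    funext i
    have he : ({[]} : Finset (List ℕ)).orderEmbOfFin (by simp) i = [] :=
      Finset.mem_singleton.1 (enum_mem (by simp) i)
    have hc0 : c i = 0 :=
      Finset.sum_eq_zero_iff.1 (by simpa using hsum) i (Finset.mem_univ i)
    rw [hc0]
    show childCount {[]} _ = 0
    rw [he]
    simp [childCount, Finset.filter_singleton]
  · -- inductive step, k ≥ 2
    set k' := k - 1 with hk'def
    have hk'1 : 1 ≤ k' := by omega
    have hkk : k' < k := by omega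
    have hgood' : ∀ m, m < k → m ≤ psum k c m := by
      intro m hm; rw [psum_eq]; exact hgood m hm
    have hSk : psum k c k = k - 1 := by
      rw [psum_eq]
      rw [Finset.filter_true_of_mem (fun (i : Fin k) _ => i.2)]
      exact hsum
    have hstep : ∀ m (h : m < k), psum k c (m + 1) = psum k c m + c ⟨m, h⟩ := by
      intro m h; rw [psum_succ, dif_pos h]
    have hlastS : psum k c k' = k' ∧ c ⟨k', hkk⟩ = 0 := by
      have h1 := hstep k' hkk
      have h2 := hgood' k' (by omega)
      have h3 : k' + 1 = k := by omega
      rw [h3] at h1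
      rw [hSk] at h1
      constructor <;> omega
    -- the last return time p before k'
    set P := (Finset.range k').filter (fun j => psum k c j = j) with hP
    have hP0 : 0 ∈ P := by
      refine Finset.mem_filter.2 ⟨Finset.mem_range.2 (by omega), ?_⟩
      simp [psum]
    set p := P.max' ⟨0, hP0⟩ with hpdef
    have hpmem := P.max'_mem ⟨0, hP0⟩
    obtain ⟨hpk', hpS⟩ : p < k' ∧ psum k c p = p := by
      have := Finset.mem_filter.1 hpmem
      exact ⟨Finset.mem_range.1 this.1, this.2⟩
    have hpk : p < k := by omega
    have hstrict : ∀ j, p < j → j < k' → j + 1 ≤ psum k c j := by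
      intro j h1 h2
      have h3 : psum k c j ≠ j := by
        intro hj
        have : j ∈ P := Finset.mem_filter.2 ⟨Finset.mem_range.2 h2, hj⟩
        exact absurd (P.le_max' j this) (not_le.2 h1)
      have h4 := hgood' j (by omega)
      omega
    have hcp : 1 ≤ c ⟨p, hpk⟩ := by
      have h1 := hstep p hpk
      have h2 := hgood' (p + 1) (by omega)
      omega
    -- the reduced sequence
    set c' : Fin k' → ℕ :=
      fun i => c ⟨(i : ℕ), lt_trans i.2 hkk⟩ - (if (i : ℕ) = p then 1 else 0) with hc'
    have hS' : ∀ m, m ≤ k' → psum k' c' m + (if p < m then 1 else 0) = psum k c m := by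
      intro m
      induction m with
      | zero => intro _; simp [psum]
      | succ m ih =>
        intro hm1
        have ihm := ih (by omega)
        have hmk' : m < k' := by omega
        have hmk : m < k := by omega
        have h1 : psum k' c' (m + 1) = psum k' c' m + c' ⟨m, hmk'⟩ := by
          rw [psum_succ, dif_pos hmk']
        have h2 := hstep m hmk
        have h3 : c' ⟨m, hmk'⟩ = c ⟨m, hmk⟩ - (if m = p then 1 else 0) := rfl
        rcases lt_trichotomy m p with hmp | hmp | hmp
        · rw [if_neg (by omega)] at h3
          rw [if_neg (by omega)] at ihm ⊢
          omega
        · subst hmp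
          rw [if_pos rfl] at h3
          rw [if_neg (by omega)] at ihm
          rw [if_pos (by omega)]
          omega
        · rw [if_neg (by omega)] at h3
          rw [if_pos (by omega)] at ihm
          rw [if_pos (by omega)]
          omega
    have hsum' : ∑ i, c' i = k' - 1 := by
      have h1 := hS' k' (le_refl _)
      rw [if_pos hpk'] at h1
      have h2 : psum k' c' k' = ∑ i, c' i := by
        rw [psum_eq]
        rw [Finset.filter_true_of_mem (fun (i : Fin k') _ => i.2)]
      rw [hlastS.1] at h1
      omega
    have hgood'' : Good k' c' := by
      intro m hm
      rw [← psum_eq]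
      have h1 := hS' m (le_of_lt hm)
      rcases le_or_gt m p with hmp | hmp
      · rw [if_neg (by omega)] at h1
        have := hgood' m (by omega)
        omega
      · rw [if_pos hmp] at h1
        have := hstrict m hmp hm
        omega
    obtain ⟨T', hT', hcard', hdeg'⟩ := IH k' hkk hk'1 c' hsum' hgood''
    set pf : Fin k' := ⟨p, hpk'⟩ with hpf
    set q := T'.orderEmbOfFin hcard' pf with hq
    set d := c' pf with hd
    have hdval : d = c ⟨p, hpk⟩ - 1 := by
      rw [hd]
      show c ⟨p, lt_trans hpk' hkk⟩ - (if p = p then 1 else 0) = c ⟨p, hpk⟩ - 1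
      rw [if_pos rfl]
    set newv := q ++ [d] with hnewv
    have hccq : childCount T' q = d := by
      rw [hd, ← hdeg']
      rfl
    have hnew : newv ∉ T' := by
      rw [hnewv]
      rw [concat_mem_iff hT' q d, hccq]
      exact lt_irrefl d
    set T : Finset (List ℕ) := insert newv T' with hT
    have hcardT : T.card = k := by
      rw [hT, Finset.card_insert_of_notMem hnew, hcard']
      omega
    have happ_inj : ∀ (l : List ℕ) (i : ℕ), l ++ [i] = q ++ [d] → l = q ∧ i = d := by
      intro l i h
      have := List.append_inj' h (by simp)
      refine ⟨this.1, ?_⟩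
      simpa using this.2
    have hTpl : IsPlaneTree T := by
      constructor
      · exact Finset.mem_insert_of_mem hT'.1
      · intro l i hli
        rcases Finset.mem_insert.1 hli with heq | hmem
        · obtain ⟨rfl, rfl⟩ := happ_inj l i heq
          refine ⟨Finset.mem_insert_of_mem (enum_mem hcard' pf), ?_⟩
          intro j hj
          exact Finset.mem_insert_of_mem ((concat_mem_iff hT' q j).2 (by omega))
        · exact ⟨Finset.mem_insert_of_mem (hT'.2 l i hmem).1,
            fun j hj => Finset.mem_insert_of_mem ((hT'.2 l i hmem).2 j hj)⟩
    have hpT'sum : ∑ i ∈ Finset.univ.filter (fun i : Fin k' => (i : ℕ) < (pf : ℕ)),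
        degSeq T' hcard' i = (pf : ℕ) := by
      rw [hdeg', ← psum_eq]
      have h1 := hS' p (by omega)
      rw [if_neg (lt_irrefl p)] at h1
      show psum k' c' p = p
      omega
    have hmax : ∀ x ∈ T', x < newv := by
      intro x hx
      obtain ⟨m, rfl⟩ := exists_enum hcard' hx
      rcases lt_trichotomy m pf with hm | hm | hm
      · calc T'.orderEmbOfFin hcard' m < q := (T'.orderEmbOfFin hcard').lt_iff_lt.2 hm
        _ < newv := lt_concat q d
      · subst hm
        exact lt_concat q d
      · have hpre := descend hT' hcard' hpT'sum (le_of_lt hm)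
        obtain ⟨rest, hrest⟩ := hpre
        cases rest with
        | nil =>
          exfalso
          rw [List.append_nil] at hrest
          have : pf = m := (T'.orderEmbOfFin hcard').injective hrest
          omega
        | cons jh rest' =>
          have hjm : q ++ [jh] ++ rest' = T'.orderEmbOfFin hcard' m := by
            rw [← hrest]
            simp [hq]
          have hjmem : q ++ [jh] ∈ T' := by
            apply prefix_mem hT' (r := rest')
            rw [hjm]
            exact enum_mem hcard' m
          have hjd : jh < d := by
            rw [← hccq]
            exact (concat_mem_iff hT' q jh).1 hjmem
          rw [← hrest, hnewv]
          exact concat_lt_concat hjd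
    -- the enumeration of T
    set f : Fin k → List ℕ :=
      fun i => if h : (i : ℕ) < k' then T'.orderEmbOfFin hcard' ⟨(i : ℕ), h⟩ else newv
      with hf
    have hfmem : ∀ i, f i ∈ T := by
      intro i
      simp only [hf]
      by_cases h : (i : ℕ) < k'
      · rw [dif_pos h]; exact Finset.mem_insert_of_mem (enum_mem hcard' _)
      · rw [dif_neg h]; exact Finset.mem_insert_self _ _
    have hfmono : StrictMono f := by
      intro a b hab
      rw [Fin.lt_def] at hab
      simp only [hf]
      by_cases hb : (b : ℕ) < k'
      · have ha : (a : ℕ) < k' := by omega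
        rw [dif_pos ha, dif_pos hb]
        exact (T'.orderEmbOfFin hcard').lt_iff_lt.2 (by rw [Fin.lt_def]; exact hab)
      · have ha : (a : ℕ) < k' := by have := b.2; omega
        rw [dif_pos ha, dif_neg hb]
        exact hmax _ (enum_mem hcard' _)
    have hfe : f = T.orderEmbOfFin hcardT :=
      Finset.orderEmbOfFin_unique hcardT hfmem hfmono
    -- child counts in T
    have hccT : ∀ x, childCount T x = childCount T' x + (if x = q then 1 else 0) := by
      intro x
      unfold childCount
      rw [hT, Finset.filter_insert]
      by_cases hxq : x = q
      · subst hxq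
        rw [if_pos ⟨d, rfl⟩, if_pos rfl,
          Finset.card_insert_of_notMem (fun h => hnew (Finset.mem_of_mem_filter _ h))]
      · rw [if_neg, if_neg hxq, add_zero]
        rintro ⟨i, hi⟩
        exact hxq ((happ_inj x i hi.symm).1)
    have hccnew : childCount T' newv = 0 := by
      rw [childCount, Finset.card_eq_zero, Finset.filter_eq_empty_iff]
      rintro y hy ⟨i, rfl⟩
      exact hnew (prefix_mem hT' (r := [i]) hy)
    refine ⟨T, hTpl, hcardT, ?_⟩
    funext i
    show childCount T (T.orderEmbOfFin hcardT i) = c i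
    rw [← hfe]
    simp only [hf]
    by_cases hi : (i : ℕ) < k'
    · rw [dif_pos hi, hccT]
      have h1 : childCount T' (T'.orderEmbOfFin hcard' ⟨(i : ℕ), hi⟩) = c' ⟨(i : ℕ), hi⟩ := by
        rw [← hdeg']; rfl
      rw [h1]
      by_cases hip : (i : ℕ) = p
      · have : (⟨(i : ℕ), hi⟩ : Fin k') = pf := Fin.ext hip
        rw [this, if_pos rfl]
        have h2 : c' pf = c ⟨p, hpk⟩ - 1 := by rw [← hd]; exact hdval
        have h3 : c i = c ⟨p, hpk⟩ := by congr 1; exact Fin.ext hip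
        omega
      · rw [if_neg]
        · have h2 : c' ⟨(i : ℕ), hi⟩ = c i - 0 := by
            show c ⟨(i : ℕ), lt_trans hi hkk⟩ - (if (i : ℕ) = p then 1 else 0) = c i - 0
            rw [if_neg hip, Fin.eta]
          omega
        · intro h
          have : (⟨(i : ℕ), hi⟩ : Fin k') = pf := (T'.orderEmbOfFin hcard').injective h
          exact hip (congrArg Fin.val this)
    · rw [dif_neg hi]
      have hik : (i : ℕ) = k' := by have := i.2; omega
      rw [hccT, hccnew, if_neg (by simp [hnewv]), ]
      have h3 : c i = c ⟨k', hkk⟩ := by congr 1; exact Fin.ext hik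
      rw [h3, hlastS.2]

end GW1
namespace GW1

/-! ### The cycle lemma -/

variable {k : ℕ}

def cyc (k : ℕ) (c : Fin k → ℕ) (i : ℕ) : ℕ :=
  if h : 0 < k then c ⟨i % k, Nat.mod_lt i h⟩ else 0

def rot (r : Fin k) (c : Fin k → ℕ) : Fin k → ℕ := fun i => c (i + r)

lemma cyc_eq (c : Fin k → ℕ) {i : ℕ} (h : i < k) : cyc k c i = c ⟨i, h⟩ := by
  rw [cyc, dif_pos (lt_of_le_of_lt (Nat.zero_le i) h)]
  congr 1
  exact Fin.ext (Nat.mod_eq_of_lt h)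

lemma cyc_rot (r : Fin k) (c : Fin k → ℕ) (i : ℕ) :
    cyc k (rot r c) i = cyc k c (i + (r : ℕ)) := by
  have hk : 0 < k := r.pos
  rw [cyc, cyc, dif_pos hk, dif_pos hk, rot]
  congr 1
  rw [Fin.add_def]
  exact Fin.ext (by simp [Nat.mod_add_mod])

lemma cyc_period (c : Fin k → ℕ) (hk : 0 < k) (i : ℕ) :
    cyc k c (i + k) = cyc k c i := by
  rw [cyc, cyc, dif_pos hk, dif_pos hk]
  congr 1
  exact Fin.ext (by simp [Nat.add_mod_right])

lemma sum_cyc (c : Fin k → ℕ) {m : ℕ} (hm : m ≤ k) :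
    ∑ j ∈ Finset.range m, cyc k c j =
      ∑ i ∈ Finset.univ.filter (fun i : Fin k => (i : ℕ) < m), c i := by
  refine Finset.sum_bij (fun j hj => (⟨j, lt_of_lt_of_le (Finset.mem_range.1 hj) hm⟩ : Fin k))
    ?_ ?_ ?_ ?_
  · intro j hj
    simp only [Finset.mem_filter, Finset.mem_univ, true_and]
    exact Finset.mem_range.1 hj
  · intro a ha b hb hab
    simpa using congrArg Fin.val hab
  · intro i hi
    obtain ⟨-, hi2⟩ := Finset.mem_filter.1 hi
    exact ⟨(i : ℕ), Finset.mem_range.2 hi2, Fin.ext rfl⟩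
  · intro j hj
    exact cyc_eq c (lt_of_lt_of_le (Finset.mem_range.1 hj) hm)

lemma good_iff_cyc (c : Fin k → ℕ) :
    Good k c ↔ ∀ m : ℕ, m < k → m ≤ ∑ j ∈ Finset.range m, cyc k c j := by
  constructor
  · intro h m hm
    rw [sum_cyc c (le_of_lt hm)]
    exact h m hm
  · intro h m hm
    rw [← sum_cyc c (le_of_lt hm)]
    exact h m hm

/-- The cycle lemma: every sequence summing to `k - 1` has exactly one rotation
satisfying the Łukasiewicz condition. -/
lemma cycle_lemma (hk : 1 ≤ k) (c : Fin k → ℕ) (hsum : ∑ i, c i = k - 1) :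
    ∃! r : Fin k, Good k (rot r c) := by
  classical
  have hk0 : 0 < k := hk
  set g : ℕ → ℤ := fun m => (∑ j ∈ Finset.range m, (cyc k c j : ℤ)) - m with hg
  have gstep : ∀ n, g (n + 1) = g n + (cyc k c n : ℤ) - 1 := by
    intro n
    simp only [hg, Finset.sum_range_succ]
    push_cast
    ring
  have hwin : ∀ r, ∑ j ∈ Finset.range k, (cyc k c (r + j) : ℤ) = (k : ℤ) - 1 := by
    intro r
    induction r with
    | zero =>
      simp only [Nat.zero_add]
      have h1 : ∑ j ∈ Finset.range k, cyc k c j = k - 1 := by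
        rw [sum_cyc c (le_refl k),
          Finset.filter_true_of_mem (fun (i : Fin k) _ => i.2), hsum]
      rw [← Nat.cast_sum, h1]
      push_cast [hk]
      omega
    | succ r ih =>
      have h1 : ∑ j ∈ Finset.range (k + 1), (cyc k c (r + j) : ℤ) =
          (∑ j ∈ Finset.range k, (cyc k c (r + j) : ℤ)) + (cyc k c (r + k) : ℤ) :=
        Finset.sum_range_succ _ _
      have h2 : ∑ j ∈ Finset.range (k + 1), (cyc k c (r + j) : ℤ) =
          (∑ j ∈ Finset.range k, (cyc k c (r + (j + 1)) : ℤ)) + (cyc k c (r + 0) : ℤ) :=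
        Finset.sum_range_succ' _ _
      have h3 : ∑ j ∈ Finset.range k, (cyc k c (r + (j + 1)) : ℤ) =
          ∑ j ∈ Finset.range k, (cyc k c (r + 1 + j) : ℤ) :=
        Finset.sum_congr rfl (fun j _ => by rw [show r + (j + 1) = r + 1 + j by omega])
      rw [h3] at h2
      rw [cyc_period c hk0 r] at h1
      simp only [Nat.add_zero] at h2
      rw [← ih]
      linarith [h1, h2]
  have gshift : ∀ r m, g (r + m) = g r + ((∑ j ∈ Finset.range m, (cyc k c (r + j) : ℤ)) - m) := by
    intro r m
    induction m with
    | zero => simp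
    | succ m ih =>
      rw [show r + (m + 1) = (r + m) + 1 by omega, gstep, ih, Finset.sum_range_succ,
        show r + m = r + m by rfl]
      push_cast
      ring
  have gk : ∀ m, g (m + k) = g m - 1 := by
    intro m
    rw [gshift m k, hwin m]
    push_cast
    ring
  have hgoodr : ∀ r : Fin k, Good k (rot r c) ↔ ∀ m : ℕ, m < k → g (↑r) ≤ g (↑r + m) := by
    intro r
    rw [good_iff_cyc]
    have hrw : ∀ m : ℕ, ∑ j ∈ Finset.range m, cyc k (rot r c) j =
        ∑ j ∈ Finset.range m, cyc k c (↑r + j) :=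
      fun m => Finset.sum_congr rfl (fun j _ => by rw [cyc_rot, Nat.add_comm])
    constructor
    · intro h m hm
      have h1 := h m hm
      rw [hrw] at h1
      have h2 := gshift (↑r) m
      have h3 : (m : ℤ) ≤ ∑ j ∈ Finset.range m, (cyc k c (↑r + j) : ℤ) := by
        rw [← Nat.cast_sum]
        exact_mod_cast h1
      omega
    · intro h m hm
      have h1 := h m hm
      have h2 := gshift (↑r) m
      have h3 : (m : ℤ) ≤ ∑ j ∈ Finset.range m, (cyc k c (↑r + j) : ℤ) := by omega
      rw [hrw m]
      rw [← Nat.cast_sum] at h3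
      exact_mod_cast h3
  -- the first argmin of g on [0, k)
  set Q : ℕ → Prop := fun j => j < k ∧ ∀ i, i < k → g j ≤ g i with hQdef
  have hQex : ∃ j, Q j := by
    obtain ⟨x, hx, hmin⟩ := Finset.exists_min_image (Finset.range k) g
      ⟨0, Finset.mem_range.2 hk0⟩
    exact ⟨x, Finset.mem_range.1 hx, fun i hi => hmin i (Finset.mem_range.2 hi)⟩
  set r0 := Nat.find hQex with hr0def
  have hr0 : Q r0 := Nat.find_spec hQex
  have hr0min : ∀ j, j < r0 → ¬ Q j := fun j hj => Nat.find_min hQex hj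
  have hlt : ∀ j, j < r0 → j < k → g r0 < g j := by
    intro j hj hjk
    rcases lt_or_ge (g r0) (g j) with h | h
    · exact h
    · exfalso
      exact hr0min j hj ⟨hjk, fun i hi => le_trans h (hr0.2 i hi)⟩
  have hex : Good k (rot ⟨r0, hr0.1⟩ c) := by
    rw [hgoodr]
    intro m hm
    simp only
    rcases lt_or_ge (r0 + m) k with h | h
    · exact hr0.2 _ h
    · have hj : r0 + m - k < r0 := by omega
      have h1 := gk (r0 + m - k)
      rw [show r0 + m - k + k = r0 + m by omega] at h1
      have h2 := hlt _ hj (by omega)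
      omega
  refine ⟨⟨r0, hr0.1⟩, hex, ?_⟩
  intro r hr
  rw [hgoodr] at hr
  have hQr : Q (r : ℕ) := by
    refine ⟨r.2, ?_⟩
    intro i hi
    rcases le_or_gt (r : ℕ) i with h | h
    · have h1 := hr (i - (r : ℕ)) (by omega)
      rwa [show (r : ℕ) + (i - (r : ℕ)) = i by omega] at h1
    · have h1 := hr (i + k - (r : ℕ)) (by omega)
      rw [show (r : ℕ) + (i + k - (r : ℕ)) = i + k by omega] at h1
      have h2 := gk i
      omega
  have hnot : ∀ j, j < (r : ℕ) → ¬ Q j := by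
    intro j hj hQj
    have h1 := hr (j + k - (r : ℕ)) (by omega)
    rw [show (r : ℕ) + (j + k - (r : ℕ)) = j + k by omega] at h1
    have h2 := gk j
    have h3 := hQj.2 (r : ℕ) r.2
    omega
  exact Fin.ext ((Nat.find_eq_iff hQex).2 ⟨hQr, hnot⟩).symm

end GW1
namespace GW1

/-! ### Weighted counting of Łukasiewicz sequences -/

variable {k : ℕ}

/-- The weight `∏ 1/(c i)!`. -/
noncomputable def W (k : ℕ) (c : Fin k → ℕ) : ℝ :=
  ∏ i, ((Nat.factorial (c i) : ℝ))⁻¹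

lemma W_rot [NeZero k] (r : Fin k) (c : Fin k → ℕ) : W k (rot r c) = W k c :=
  Fintype.prod_equiv (Equiv.addRight r) _ _ (fun _ => rfl)

lemma sum_rot_eq [NeZero k] (r : Fin k) (c : Fin k → ℕ) : ∑ i, rot r c i = ∑ i, c i :=
  Fintype.sum_equiv (Equiv.addRight r) _ _ (fun _ => rfl)

lemma rot_mem_piAntidiag [NeZero k] {n : ℕ} (r : Fin k) {c : Fin k → ℕ}
    (hc : c ∈ Finset.piAntidiag (Finset.univ : Finset (Fin k)) n) :
    rot r c ∈ Finset.piAntidiag (Finset.univ : Finset (Fin k)) n := by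
  rw [Finset.mem_piAntidiag] at hc ⊢
  exact ⟨(sum_rot_eq r c).trans hc.1, fun i _ => Finset.mem_univ i⟩

lemma count_rot (hk : 1 ≤ k) :
    ∑ c ∈ Finset.piAntidiag (Finset.univ : Finset (Fin k)) (k - 1), W k c =
      k * ∑ c ∈ (Finset.piAntidiag (Finset.univ : Finset (Fin k)) (k - 1)).filter (Good k),
        W k c := by
  classical
  haveI : NeZero k := ⟨by omega⟩
  set A := Finset.piAntidiag (Finset.univ : Finset (Fin k)) (k - 1) with hA
  have h1 : ∀ c ∈ A, W k c = ∑ r : Fin k, if Good k (rot r c) then W k c else 0 := by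
    intro c hc
    obtain ⟨r0, hr0, huniq⟩ := cycle_lemma hk c (Finset.mem_piAntidiag.1 hc).1
    have hfilter : Finset.univ.filter (fun r : Fin k => Good k (rot r c)) = {r0} := by
      ext r
      simp only [Finset.mem_filter, Finset.mem_univ, true_and, Finset.mem_singleton]
      exact ⟨fun h => huniq r h, fun h => h ▸ hr0⟩
    rw [← Finset.sum_filter, hfilter, Finset.sum_singleton]
  rw [Finset.sum_congr rfl h1, Finset.sum_comm]
  have h2 : ∀ r : Fin k, (∑ c ∈ A, if Good k (rot r c) then W k c else 0) =
      ∑ c ∈ A.filter (Good k), W k c := by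
    intro r
    have h3 : ∀ c ∈ A, (if Good k (rot r c) then W k c else 0) =
        (fun c' => if Good k c' then W k c' else 0) (rot r c) := by
      intro c _
      simp only [W_rot]
    rw [Finset.sum_congr rfl h3]
    have h4 : ∑ c ∈ A, (fun c' => if Good k c' then W k c' else 0) (rot r c) =
        ∑ c ∈ A, (fun c' => if Good k c' then W k c' else 0) c :=
      Finset.sum_nbij' (i := fun c => rot r c) (j := fun c => rot (-r) c)
        (fun c hc => rot_mem_piAntidiag r hc) (fun c hc => rot_mem_piAntidiag (-r) hc)
        (fun c _ => funext (fun i => by simp only [rot, neg_add_cancel_right]))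
        (fun c _ => funext (fun i => by simp only [rot, add_neg_cancel_right]))
        (fun c _ => rfl)
    rw [h4]
    simp only []
    rw [Finset.sum_filter]
  rw [Finset.sum_congr rfl (fun r _ => h2 r), Finset.sum_const, Finset.card_univ,
    Fintype.card_fin, nsmul_eq_mul]

lemma sum_W (hk : 1 ≤ k) :
    ∑ c ∈ Finset.piAntidiag (Finset.univ : Finset (Fin k)) (k - 1), W k c =
      (k : ℝ) ^ (k - 1) / (Nat.factorial (k - 1)) := by
  classical
  set A := Finset.piAntidiag (Finset.univ : Finset (Fin k)) (k - 1) with hA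
  have h1 := Finset.sum_pow_eq_sum_piAntidiag (Finset.univ : Finset (Fin k))
    (fun _ => (1 : ℝ)) (k - 1)
  simp only [one_pow, Finset.prod_const_one, mul_one, Finset.sum_const,
    Finset.card_univ, Fintype.card_fin, nsmul_eq_mul] at h1
  -- h1 : (k * 1)^(k-1) = ∑ c ∈ A, multinomial
  have h2 : ∀ c ∈ A, (Nat.multinomial Finset.univ c : ℝ) =
      (Nat.factorial (k - 1) : ℝ) * W k c := by
    intro c hc
    have hs := Nat.multinomial_spec Finset.univ c
    rw [(Finset.mem_piAntidiag.1 hc).1] at hs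
    have hs' : (∏ i, ((c i).factorial : ℝ)) * (Nat.multinomial Finset.univ c : ℝ) =
        (Nat.factorial (k - 1) : ℝ) := by exact_mod_cast congrArg (Nat.cast (R := ℝ)) hs
    have hprod_ne : (∏ i, ((c i).factorial : ℝ)) ≠ 0 :=
      Finset.prod_ne_zero_iff.2 (fun i _ => Nat.cast_ne_zero.2 (Nat.factorial_ne_zero _))
    rw [W, Finset.prod_inv_distrib]
    field_simp
    linarith [hs']
  have h3 : (k : ℝ) ^ (k - 1) = (Nat.factorial (k - 1) : ℝ) * ∑ c ∈ A, W k c := by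
    rw [h1, Finset.mul_sum]
    exact Finset.sum_congr rfl h2
  have hfne : (Nat.factorial (k - 1) : ℝ) ≠ 0 :=
    Nat.cast_ne_zero.2 (Nat.factorial_ne_zero _)
  field_simp
  linarith [h3]

lemma sum_W_good (hk : 1 ≤ k) :
    ∑ c ∈ (Finset.piAntidiag (Finset.univ : Finset (Fin k)) (k - 1)).filter (Good k), W k c =
      (k : ℝ) ^ (k - 1) / (Nat.factorial k) := by
  have h1 := count_rot hk
  have h2 := sum_W hk
  have hkf : (Nat.factorial k : ℝ) = (k : ℝ) * (Nat.factorial (k - 1) : ℝ) := by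
    obtain ⟨m, rfl⟩ : ∃ m, k = m + 1 := ⟨k - 1, by omega⟩
    rw [Nat.factorial_succ]
    push_cast
    simp
  have hkne : (k : ℝ) ≠ 0 := Nat.cast_ne_zero.2 (by omega)
  have hfne : (Nat.factorial (k - 1) : ℝ) ≠ 0 :=
    Nat.cast_ne_zero.2 (Nat.factorial_ne_zero _)
  rw [h2] at h1
  rw [hkf]
  field_simp at h1 ⊢
  linarith [h1]

end GW1
namespace GW1

variable {T : Finset (List ℕ)} {k : ℕ}

/-- Lists with entries `< k` and length `≤ n`. -/
def boundedLists (k : ℕ) : ℕ → Finset (List ℕ)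
  | 0 => {[]}
  | n + 1 => {[]} ∪ (Finset.range k).biUnion (fun i => (boundedLists k n).image (fun l => i :: l))

lemma mem_boundedLists (k : ℕ) : ∀ (n : ℕ) (l : List ℕ),
    l ∈ boundedLists k n ↔ l.length ≤ n ∧ ∀ x ∈ l, x < k := by
  intro n
  induction n with
  | zero =>
    intro l
    simp only [boundedLists, Finset.mem_singleton]
    constructor
    · rintro rfl; simp
    · rintro ⟨h1, -⟩
      simpa using List.length_eq_zero_iff.1 (Nat.le_zero.1 h1)
  | succ n ih =>
    intro l
    cases l with
    | nil => simp [boundedLists]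
    | cons a l =>
      simp only [boundedLists, Finset.mem_union, Finset.mem_singleton,
        Finset.mem_biUnion, Finset.mem_range, Finset.mem_image]
      constructor
      · rintro (h | ⟨i, hi, l', hl', heq⟩)
        · exact absurd h (by simp)
        · injection heq with ha hl
          subst ha
          subst hl
          obtain ⟨h1, h2⟩ := (ih l').1 hl'
          refine ⟨by simpa using h1, ?_⟩
          intro x hx
          rcases List.mem_cons.1 hx with rfl | hx
          · exact hi
          · exact h2 x hx
      · rintro ⟨h1, h2⟩
        refine Or.inr ⟨a, h2 a (by simp), l, ?_, rfl⟩
        exact (ih l).2 ⟨by simpa using h1, fun x hx => h2 x (List.mem_cons_of_mem a hx)⟩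

lemma tree_entries (hT : IsPlaneTree T) (hcard : T.card = k) :
    ∀ x ∈ T, ∀ j ∈ x, j < k := by
  intro x
  induction x using List.reverseRecOn with
  | nil => intro _ j hj; simp at hj
  | append_singleton y i ihy =>
    intro hmem j hj
    have hy : y ∈ T := (hT.2 y i hmem).1
    rcases List.mem_append.1 hj with hj | hj
    · exact ihy hy j hj
    · have hji : j = i := by simpa using hj
      subst hji
      calc j < childCount T y := (concat_mem_iff hT y j).1 hmem
      _ ≤ T.card := Finset.card_filter_le T _
      _ = k := hcard

lemma tree_length (hT : IsPlaneTree T) (hcard : T.card = k) :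
    ∀ x ∈ T, x.length ≤ k := by
  intro x hx
  have hsub : (Finset.range (x.length + 1)).image (fun j => x.take j) ⊆ T := by
    intro y hy
    obtain ⟨j, -, rfl⟩ := Finset.mem_image.1 hy
    exact prefix_mem hT (r := x.drop j) (by rw [List.take_append_drop]; exact hx)
  have hinj : Set.InjOn (fun j => x.take j) ↑(Finset.range (x.length + 1)) := by
    intro j1 h1 j2 h2 h
    have h' : x.take j1 = x.take j2 := h
    have l1 : (x.take j1).length = j1 :=
      List.length_take_of_le (by simpa [Nat.lt_succ_iff] using h1)
    have l2 : (x.take j2).length = j2 :=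
      List.length_take_of_le (by simpa [Nat.lt_succ_iff] using h2)
    rw [← l1, ← l2, h']
  have hcardle := Finset.card_le_card hsub
  rw [Finset.card_image_of_injOn hinj, Finset.card_range, hcard] at hcardle
  omega

lemma finite_trees (k : ℕ) :
    Set.Finite {T : Finset (List ℕ) | IsPlaneTree T ∧ T.card = k} := by
  apply Set.Finite.subset (Finset.finite_toSet ((boundedLists k k).powerset))
  intro T hT
  obtain ⟨h1, h2⟩ := hT
  rw [Finset.mem_coe, Finset.mem_powerset]
  intro x hx
  rw [mem_boundedLists]
  exact ⟨tree_length h1 h2 x hx, tree_entries h1 h2 x hx⟩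

theorem main (k : ℕ) (hk : 1 ≤ k) :
    gwSizeProb 1 k = Real.exp (-(k : ℝ)) * (k : ℝ) ^ (k - 1) / (Nat.factorial k) := by
  classical
  haveI fin1 : Fintype {T : Finset (List ℕ) // IsPlaneTree T ∧ T.card = k} :=
    (finite_trees k).fintype
  have hweight : ∀ (T : Finset (List ℕ)) (hT : IsPlaneTree T) (hcard : T.card = k),
      gwWeight 1 T = Real.exp (-(k : ℝ)) * W k (degSeq T hcard) := by
    intro T hT hcard
    rw [gwWeight]
    have h1 : ∀ l ∈ T, poissonPMF 1 (childCount T l) =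
        Real.exp (-1) * ((Nat.factorial (childCount T l) : ℝ))⁻¹ := by
      intro l _
      rw [poissonPMF, one_pow, mul_one, div_eq_mul_inv]
    rw [Finset.prod_congr rfl h1, Finset.prod_mul_distrib, Finset.prod_const, hcard]
    congr 1
    · rw [← Real.exp_nat_mul]
      congr 1
      push_cast
      ring
    · rw [W]
      exact (Finset.prod_bij (fun (i : Fin k) _ => T.orderEmbOfFin hcard i)
        (fun i _ => enum_mem hcard i)
        (fun a _ b _ h => (T.orderEmbOfFin hcard).injective h)
        (fun x hx => ⟨(exists_enum hcard hx).choose, Finset.mem_univ _,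
          (exists_enum hcard hx).choose_spec⟩)
        (fun i _ => rfl)).symm
  have hstep1 : gwSizeProb 1 k =
      ∑ T : {T : Finset (List ℕ) // IsPlaneTree T ∧ T.card = k}, gwWeight 1 T.1 := by
    rw [gwSizeProb, tsum_fintype]
  rw [hstep1]
  have hsum_eq : (∑ T : {T : Finset (List ℕ) // IsPlaneTree T ∧ T.card = k}, gwWeight 1 T.1)
      = ∑ c ∈ (Finset.piAntidiag (Finset.univ : Finset (Fin k)) (k - 1)).filter (Good k),
          Real.exp (-(k : ℝ)) * W k c := by
    refine Finset.sum_bij (fun T _ => degSeq T.1 T.2.2) ?_ ?_ ?_ ?_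
    · intro T _
      exact Finset.mem_filter.2 ⟨Finset.mem_piAntidiag.2
        ⟨sum_degSeq T.2.1 T.2.2, fun i _ => Finset.mem_univ i⟩, good_degSeq T.2.1 T.2.2⟩
    · intro a _ b _ h
      exact Subtype.ext (degSeq_injective a.2.1 b.2.1 a.2.2 b.2.2 h)
    · intro c hc
      obtain ⟨hc1, hc2⟩ := Finset.mem_filter.1 hc
      obtain ⟨hsumc, -⟩ := Finset.mem_piAntidiag.1 hc1
      obtain ⟨T, hT, hcard, hdeg⟩ := degSeq_surjective k hk c hsumc hc2
      exact ⟨⟨T, hT, hcard⟩, Finset.mem_univ _, hdeg⟩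
    · intro T _
      exact hweight T.1 T.2.1 T.2.2
  rw [hsum_eq, ← Finset.mul_sum, sum_W_good hk]
  exact (mul_div_assoc _ _ _).symm

end GW1


/-- for the Galton--Watson tree with offspring distribution Poisson(1),
the probability of having exactly `k` vertices is `e^{-k} k^{k-1} / k!`. -/
theorem stmt1 (k : ℕ) (hk : 1 ≤ k) :
    gwSizeProb 1 k = Real.exp (-(k : ℝ)) * (k : ℝ) ^ (k - 1) / (Nat.factorial k) := by
  exact GW1.main k hk
end
end

section
/- Let K(n) be kernels (multigraphs with minimum degree at least 3), k(n) ∈ ℕ, e(n) ∈ E(K), and let C = C(K,k) be a core chosen uniformly at random from all cores with kernel K and |V(K)| + k vertices (equivalently, a uniformly random subdivision of K by k additional vertices). If e(K) = o(k), then for every fixed j ∈ ℕ₀, P(the number of subdivision vertices placed on e is at most j) = o(1); that is, with high probability the subdivision number of e tends to infinity. -/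
open scoped Classical BigOperators
open Finset Filter

noncomputable section

/-- The labelled subdivisions of a multigraph with edge set `Fin ε` by `k` vertices:
each of the `k` vertices is placed on an edge at a position, injectively, and the
positions on each edge form an initial segment. -/
def subdivSet (ε k : ℕ) : Finset (Fin k → Fin ε × Fin k) :=
  univ.filter (fun σ => Function.Injective σ ∧
    ∀ (i : Fin k) (j : ℕ), j < ((σ i).2 : ℕ) →
      ∃ i', (σ i').1 = (σ i).1 ∧ ((σ i').2 : ℕ) = j)

/-- The subdivision number of an edge: the number of subdivision vertices placed on it. -/
def subCount {ε k : ℕ} (σ : Fin k → Fin ε × Fin k) (e : Fin ε) : ℕ :=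
  (univ.filter (fun i => (σ i).1 = e)).card

namespace Stmt12Aux

lemma downward_range (I : Finset ℕ) (h : ∀ q ∈ I, ∀ r < q, r ∈ I) :
    I = Finset.range I.card := by
  have h2 : ∀ q ∈ I, q < I.card := by
    intro q hq
    have hsub : Finset.range (q + 1) ⊆ I := by
      intro r hr
      have hr' : r ≤ q := Nat.lt_succ_iff.mp (Finset.mem_range.mp hr)
      rcases Nat.lt_or_ge r q with h' | h'
      · exact h q hq r h'
      · have : r = q := le_antisymm hr' h'
        exact this ▸ hq
    have := Finset.card_le_card hsub
    rw [Finset.card_range] at this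
    omega
  apply Finset.Subset.antisymm
  · intro q hq; exact Finset.mem_range.mpr (h2 q hq)
  · intro r hr
    by_contra hrI
    have hsub : I ⊆ Finset.range r := by
      intro q hq
      rcases Nat.lt_or_ge q r with h' | h'
      · exact Finset.mem_range.mpr h'
      · exfalso
        rcases Nat.eq_or_lt_of_le h' with h'' | h''
        · exact hrI (h'' ▸ hq)
        · exact hrI (h q hq r h'')
    have := Finset.card_le_card hsub
    simp only [Finset.card_range] at this
    exact absurd (Finset.mem_range.mp hr) (by omega)

variable {ε k : ℕ}

lemma mem_subdivSet {σ : Fin k → Fin ε × Fin k} :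
    σ ∈ subdivSet ε k ↔ Function.Injective σ ∧
      ∀ (i : Fin k) (j : ℕ), j < ((σ i).2 : ℕ) →
        ∃ i', (σ i').1 = (σ i).1 ∧ ((σ i').2 : ℕ) = j := by
  simp [subdivSet]

lemma image_snd_eq_range {σ : Fin k → Fin ε × Fin k} (hσ : σ ∈ subdivSet ε k) (e : Fin ε) :
    (univ.filter (fun i => (σ i).1 = e)).image (fun i => ((σ i).2 : ℕ)) =
      Finset.range (subCount σ e) := by
  obtain ⟨hinj, hseg⟩ := mem_subdivSet.mp hσ
  have hcard : ((univ.filter (fun i => (σ i).1 = e)).image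
      (fun i => ((σ i).2 : ℕ))).card = subCount σ e := by
    rw [subCount]
    apply Finset.card_image_of_injOn
    intro a ha b hb hab
    simp only [Finset.coe_filter, Set.mem_setOf_eq, Finset.mem_univ, true_and] at ha hb
    apply hinj
    exact Prod.ext (ha.trans hb.symm) (Fin.ext hab)
  rw [← hcard]
  apply downward_range
  intro q hq r hr
  simp only [Finset.mem_image, Finset.mem_filter, Finset.mem_univ, true_and] at hq ⊢
  obtain ⟨i, hi, hiq⟩ := hq
  obtain ⟨i', hi'1, hi'2⟩ := hseg i r (by omega)
  exact ⟨i', hi'1.trans hi, hi'2⟩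

lemma pos_lt_subCount {σ : Fin k → Fin ε × Fin k} (hσ : σ ∈ subdivSet ε k) (i : Fin k) :
    ((σ i).2 : ℕ) < subCount σ (σ i).1 := by
  have : ((σ i).2 : ℕ) ∈ Finset.range (subCount σ (σ i).1) := by
    rw [← image_snd_eq_range hσ]
    exact Finset.mem_image.mpr ⟨i, by simp, rfl⟩
  simpa using this

lemma exists_at_pos {σ : Fin k → Fin ε × Fin k} (hσ : σ ∈ subdivSet ε k) (e : Fin ε)
    {p : ℕ} (hp : p < subCount σ e) : ∃ i, (σ i).1 = e ∧ ((σ i).2 : ℕ) = p := by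
  have : p ∈ (univ.filter (fun i => (σ i).1 = e)).image (fun i => ((σ i).2 : ℕ)) := by
    rw [image_snd_eq_range hσ]; simpa using hp
  simp only [Finset.mem_image, Finset.mem_filter, Finset.mem_univ, true_and] at this
  obtain ⟨i, h1, h2⟩ := this
  exact ⟨i, h1, h2⟩

lemma sum_subCount (σ : Fin k → Fin ε × Fin k) : ∑ e : Fin ε, subCount σ e = k := by
  have := Finset.card_eq_sum_card_fiberwise
    (f := fun i => (σ i).1) (s := (univ : Finset (Fin k))) (t := univ) (fun x _ => mem_univ _)
  simpa [subCount] using this.symm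

/-- Move vertex `i₀` to the end of edge `e₀`, shifting down the positions above
its old slot. -/
def move (σ : Fin k → Fin ε × Fin k) (i₀ : Fin k) (e₀ : Fin ε) : Fin k → Fin ε × Fin k :=
  fun i' =>
    if h : subCount σ e₀ < k then
      if i' = i₀ then (e₀, ⟨subCount σ e₀, h⟩)
      else if (σ i').1 = (σ i₀).1 ∧ ((σ i₀).2 : ℕ) < ((σ i').2 : ℕ) then
        ((σ i').1, ⟨((σ i').2 : ℕ) - 1, lt_of_le_of_lt (Nat.sub_le _ _) (σ i').2.2⟩)
      else σ i'
    else σ i'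

section Move
variable {σ : Fin k → Fin ε × Fin k} {i₀ : Fin k} {e₀ : Fin ε}

lemma count_lt (hσ : σ ∈ subdivSet ε k) (hne : (σ i₀).1 ≠ e₀) : subCount σ e₀ < k := by
  have hsub : univ.filter (fun i => (σ i).1 = e₀) ⊆ univ.erase i₀ := by
    intro i hi
    simp only [Finset.mem_filter, Finset.mem_univ, true_and] at hi
    refine Finset.mem_erase.mpr ⟨?_, mem_univ _⟩
    rintro rfl; exact hne hi
  have := Finset.card_le_card hsub
  have hk : 0 < k := i₀.pos
  rw [Finset.card_erase_of_mem (mem_univ _)] at this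
  simp only [Finset.card_univ, Fintype.card_fin] at this
  calc subCount σ e₀ ≤ k - 1 := this
  _ < k := by omega

lemma move_at (hσ : σ ∈ subdivSet ε k) (hne : (σ i₀).1 ≠ e₀) :
    move σ i₀ e₀ i₀ = (e₀, ⟨subCount σ e₀, count_lt hσ hne⟩) := by
  rw [move, dif_pos (count_lt hσ hne), if_pos rfl]

lemma move_shift (hσ : σ ∈ subdivSet ε k) (hne : (σ i₀).1 ≠ e₀) {i' : Fin k} (hi' : i' ≠ i₀)
    (hc : (σ i').1 = (σ i₀).1 ∧ ((σ i₀).2 : ℕ) < ((σ i').2 : ℕ)) :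
    move σ i₀ e₀ i' = ((σ i').1, ⟨((σ i').2 : ℕ) - 1,
      lt_of_le_of_lt (Nat.sub_le _ _) (σ i').2.2⟩) := by
  rw [move, dif_pos (count_lt hσ hne), if_neg hi', if_pos hc]

lemma move_keep (hσ : σ ∈ subdivSet ε k) (hne : (σ i₀).1 ≠ e₀) {i' : Fin k} (hi' : i' ≠ i₀)
    (hc : ¬((σ i').1 = (σ i₀).1 ∧ ((σ i₀).2 : ℕ) < ((σ i').2 : ℕ))) :
    move σ i₀ e₀ i' = σ i' := by
  rw [move, dif_pos (count_lt hσ hne), if_neg hi', if_neg hc]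

lemma move_fst (hσ : σ ∈ subdivSet ε k) (hne : (σ i₀).1 ≠ e₀) {i' : Fin k} (hi' : i' ≠ i₀) :
    (move σ i₀ e₀ i').1 = (σ i').1 := by
  by_cases hc : (σ i').1 = (σ i₀).1 ∧ ((σ i₀).2 : ℕ) < ((σ i').2 : ℕ)
  · rw [move_shift hσ hne hi' hc]
  · rw [move_keep hσ hne hi' hc]

lemma move_inj (hσ : σ ∈ subdivSet ε k) (hne : (σ i₀).1 ≠ e₀) :
    Function.Injective (move σ i₀ e₀) := by
  obtain ⟨hinj, hseg⟩ := mem_subdivSet.mp hσ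
  have key : ∀ a, a ≠ i₀ → move σ i₀ e₀ a ≠ move σ i₀ e₀ i₀ := by
    intro a ha hEq
    rw [move_at hσ hne] at hEq
    by_cases hc : (σ a).1 = (σ i₀).1 ∧ ((σ i₀).2 : ℕ) < ((σ a).2 : ℕ)
    · rw [move_shift hσ hne ha hc] at hEq
      have : (σ a).1 = e₀ := (Prod.ext_iff.mp hEq).1
      exact hne (hc.1 ▸ this)
    · rw [move_keep hσ hne ha hc] at hEq
      have h1 : (σ a).1 = e₀ := (Prod.ext_iff.mp hEq).1
      have h2 : ((σ a).2 : ℕ) = subCount σ e₀ := congrArg Fin.val (Prod.ext_iff.mp hEq).2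
      have := pos_lt_subCount hσ a
      rw [h1, h2] at this
      omega
  intro a b hEq
  by_cases ha : a = i₀
  · by_cases hb : b = i₀
    · rw [ha, hb]
    · exact absurd (ha ▸ hEq).symm (key b hb)
  · by_cases hb : b = i₀
    · exact absurd (hb ▸ hEq) (key a ha)
    · -- both ≠ i₀
      by_cases hca : (σ a).1 = (σ i₀).1 ∧ ((σ i₀).2 : ℕ) < ((σ a).2 : ℕ) <;>
      by_cases hcb : (σ b).1 = (σ i₀).1 ∧ ((σ i₀).2 : ℕ) < ((σ b).2 : ℕ)
      · rw [move_shift hσ hne ha hca, move_shift hσ hne hb hcb] at hEq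
        have h1 : (σ a).1 = (σ b).1 := (Prod.ext_iff.mp hEq).1
        have h2 : ((σ a).2 : ℕ) - 1 = ((σ b).2 : ℕ) - 1 :=
          congrArg Fin.val (Prod.ext_iff.mp hEq).2
        have h3 : ((σ a).2 : ℕ) = ((σ b).2 : ℕ) := by omega
        exact hinj (Prod.ext h1 (Fin.ext h3))
      · rw [move_shift hσ hne ha hca, move_keep hσ hne hb hcb] at hEq
        exfalso
        have h1 : (σ b).1 = (σ a).1 := ((Prod.ext_iff.mp hEq).1).symm
        have h2 : ((σ b).2 : ℕ) = ((σ a).2 : ℕ) - 1 :=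
          (congrArg Fin.val (Prod.ext_iff.mp hEq).2).symm
        have hble : ((σ b).2 : ℕ) ≤ ((σ i₀).2 : ℕ) := by
          by_contra hgt
          exact hcb ⟨h1.trans hca.1, by omega⟩
        have : ((σ b).2 : ℕ) = ((σ i₀).2 : ℕ) := by omega
        have : σ b = σ i₀ := Prod.ext (h1.trans hca.1) (Fin.ext this)
        exact hb (hinj this)
      · rw [move_keep hσ hne ha hca, move_shift hσ hne hb hcb] at hEq
        exfalso
        have h1 : (σ a).1 = (σ b).1 := (Prod.ext_iff.mp hEq).1
        have h2 : ((σ a).2 : ℕ) = ((σ b).2 : ℕ) - 1 :=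
          congrArg Fin.val (Prod.ext_iff.mp hEq).2
        have hale : ((σ a).2 : ℕ) ≤ ((σ i₀).2 : ℕ) := by
          by_contra hgt
          exact hca ⟨h1.trans hcb.1, by omega⟩
        have : ((σ a).2 : ℕ) = ((σ i₀).2 : ℕ) := by omega
        have : σ a = σ i₀ := Prod.ext (h1.trans hcb.1) (Fin.ext this)
        exact ha (hinj this)
      · rw [move_keep hσ hne ha hca, move_keep hσ hne hb hcb] at hEq
        exact hinj hEq

lemma move_seg (hσ : σ ∈ subdivSet ε k) (hne : (σ i₀).1 ≠ e₀) :
    ∀ (i : Fin k) (jq : ℕ), jq < ((move σ i₀ e₀ i).2 : ℕ) →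
      ∃ i', (move σ i₀ e₀ i').1 = (move σ i₀ e₀ i).1 ∧ ((move σ i₀ e₀ i').2 : ℕ) = jq := by
  obtain ⟨hinj, hseg⟩ := mem_subdivSet.mp hσ
  intro i jq hjq
  by_cases hi : i = i₀
  · rw [hi] at hjq ⊢
    rw [move_at hσ hne] at hjq ⊢
    simp only at hjq
    -- jq < subCount σ e₀ ; find vertex of σ on e₀ at position jq
    obtain ⟨i', h1, h2⟩ := exists_at_pos hσ e₀ hjq
    have hi' : i' ≠ i₀ := by rintro rfl; exact hne h1
    have hc : ¬((σ i').1 = (σ i₀).1 ∧ ((σ i₀).2 : ℕ) < ((σ i').2 : ℕ)) := by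
      rintro ⟨hc1, -⟩; exact hne (hc1 ▸ h1)
    refine ⟨i', ?_, ?_⟩ <;> rw [move_keep hσ hne hi' hc]
    · exact h1
    · exact h2
  · by_cases hc : (σ i).1 = (σ i₀).1 ∧ ((σ i₀).2 : ℕ) < ((σ i).2 : ℕ)
    · -- shifted vertex on edge e₁ := (σ i₀).1 at position (σ i).2 - 1
      rw [move_shift hσ hne hi hc] at hjq ⊢
      simp only at hjq ⊢
      set p₁ := ((σ i₀).2 : ℕ) with hp₁
      rcases Nat.lt_or_ge jq p₁ with hlt | hge
      · obtain ⟨i', h1, h2⟩ := hseg i₀ jq hlt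
        have hi' : i' ≠ i₀ := by rintro rfl; omega
        have hc' : ¬((σ i').1 = (σ i₀).1 ∧ ((σ i₀).2 : ℕ) < ((σ i').2 : ℕ)) := by
          rintro ⟨-, h⟩; omega
        refine ⟨i', ?_, ?_⟩ <;> rw [move_keep hσ hne hi' hc']
        · exact h1.trans hc.1.symm
        · exact h2
      · -- jq ≥ p₁: take the σ-vertex on e₁ at position jq+1 and shift it
        have hlt : jq + 1 < ((σ i).2 : ℕ) := by omega
        obtain ⟨i', h1, h2⟩ := hseg i (jq + 1) hlt
        have hi' : i' ≠ i₀ := by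
          rintro rfl; omega
        have hc' : (σ i').1 = (σ i₀).1 ∧ ((σ i₀).2 : ℕ) < ((σ i').2 : ℕ) := by
          exact ⟨h1.trans hc.1, by omega⟩
        refine ⟨i', ?_, ?_⟩ <;> rw [move_shift hσ hne hi' hc']
        · exact h1
        · simp only; omega
    · rw [move_keep hσ hne hi hc] at hjq ⊢
      obtain ⟨i', h1, h2⟩ := hseg i jq hjq
      have hi' : i' ≠ i₀ := by
        rintro rfl
        -- then (σ i).1 = (σ i₀).1 and jq = p₁ < (σ i).2, contradicting hc
        exact hc ⟨h1.symm, by omega⟩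
      have hc' : ¬((σ i').1 = (σ i₀).1 ∧ ((σ i₀).2 : ℕ) < ((σ i').2 : ℕ)) := by
        rintro ⟨hc1, hgt⟩
        -- (σ i).1 = e₁ and (σ i').2 = jq > p₁, so jq > p₁ and jq < (σ i).2 ⇒ hc
        exact hc ⟨h1.symm.trans hc1, by omega⟩
      refine ⟨i', ?_, ?_⟩ <;> rw [move_keep hσ hne hi' hc']
      · exact h1
      · exact h2

lemma move_mem (hσ : σ ∈ subdivSet ε k) (hne : (σ i₀).1 ≠ e₀) :
    move σ i₀ e₀ ∈ subdivSet ε k :=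
  mem_subdivSet.mpr ⟨move_inj hσ hne, move_seg hσ hne⟩

lemma move_count_e₀ (hσ : σ ∈ subdivSet ε k) (hne : (σ i₀).1 ≠ e₀) :
    subCount (move σ i₀ e₀) e₀ = subCount σ e₀ + 1 := by
  have hset : univ.filter (fun i => ((move σ i₀ e₀) i).1 = e₀) =
      insert i₀ (univ.filter (fun i => (σ i).1 = e₀)) := by
    ext i
    simp only [Finset.mem_filter, Finset.mem_univ, true_and, Finset.mem_insert]
    by_cases hi : i = i₀
    · subst hi
      simp only [move_at hσ hne, true_or, iff_true]
    · rw [move_fst hσ hne hi]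
      constructor
      · intro h; exact Or.inr h
      · rintro (h | h)
        · exact absurd h hi
        · exact h
  rw [subCount, hset, Finset.card_insert_of_notMem, subCount]
  simp only [Finset.mem_filter, Finset.mem_univ, true_and]
  exact hne

lemma move_count_e₁ (hσ : σ ∈ subdivSet ε k) (hne : (σ i₀).1 ≠ e₀) :
    subCount (move σ i₀ e₀) (σ i₀).1 = subCount σ (σ i₀).1 - 1 := by
  have hset : univ.filter (fun i => ((move σ i₀ e₀) i).1 = (σ i₀).1) =
      (univ.filter (fun i => (σ i).1 = (σ i₀).1)).erase i₀ := by
    ext i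
    simp only [Finset.mem_filter, Finset.mem_univ, true_and, Finset.mem_erase]
    by_cases hi : i = i₀
    · subst hi
      rw [move_at hσ hne]
      simp only [ne_eq, not_true_eq_false, false_and, iff_false]
      exact fun h => hne h.symm
    · rw [move_fst hσ hne hi]
      simp [hi]
  rw [subCount, hset, Finset.card_erase_of_mem, subCount]
  simp

lemma move_other_count (hσ : σ ∈ subdivSet ε k) (hne : (σ i₀).1 ≠ e₀) :
    ((σ i₀).2 : ℕ) ≤ subCount (move σ i₀ e₀) (σ i₀).1 := by
  rw [move_count_e₁ hσ hne]
  have := pos_lt_subCount hσ i₀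
  omega

/-- Recovery of the original placement from the moved one plus the old slot. -/
def recov (τ : Fin k → Fin ε × Fin k) (q : Fin ε × Fin k) (i' : Fin k) : Fin ε × Fin k :=
  if h : (τ i').1 = q.1 ∧ ((q.2 : ℕ) ≤ ((τ i').2 : ℕ)) ∧ ((τ i').2 : ℕ) + 1 < k
  then (q.1, ⟨((τ i').2 : ℕ) + 1, h.2.2⟩) else τ i'

lemma move_recov (hσ : σ ∈ subdivSet ε k) (hne : (σ i₀).1 ≠ e₀) {i' : Fin k} (hi' : i' ≠ i₀) :
    σ i' = recov (move σ i₀ e₀) (σ i₀) i' := by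
  obtain ⟨hinj, hseg⟩ := mem_subdivSet.mp hσ
  by_cases hc : (σ i').1 = (σ i₀).1 ∧ ((σ i₀).2 : ℕ) < ((σ i').2 : ℕ)
  · have hmv := move_shift hσ hne hi' hc
    have hcond : (move σ i₀ e₀ i').1 = (σ i₀).1 ∧
        (((σ i₀).2 : ℕ) ≤ ((move σ i₀ e₀ i').2 : ℕ)) ∧ ((move σ i₀ e₀ i').2 : ℕ) + 1 < k := by
      refine ⟨by rw [hmv]; exact hc.1, ?_, ?_⟩ <;> rw [hmv] <;> simp only <;>
        have := (σ i').2.2 <;> omega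
    rw [recov, dif_pos hcond]
    refine Prod.ext hc.1 (Fin.ext ?_)
    have hval : ((move σ i₀ e₀ i').2 : ℕ) = ((σ i').2 : ℕ) - 1 := by rw [hmv]
    simp only [hval]
    omega
  · have hmv := move_keep hσ hne hi' hc
    have hcond : ¬((move σ i₀ e₀ i').1 = (σ i₀).1 ∧
        (((σ i₀).2 : ℕ) ≤ ((move σ i₀ e₀ i').2 : ℕ)) ∧ ((move σ i₀ e₀ i').2 : ℕ) + 1 < k) := by
      rw [hmv]
      rintro ⟨h1, h2, -⟩
      by_cases heq : ((σ i').2 : ℕ) = ((σ i₀).2 : ℕ)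
      · exact hi' (hinj (Prod.ext h1 (Fin.ext heq)))
      · exact hc ⟨h1, by omega⟩
    rw [recov, dif_neg hcond]
    exact hmv.symm

end Move

/-- The set of subdivisions with exactly `m` vertices on `e₀`. -/
def Afin (ε k : ℕ) (e₀ : Fin ε) (m : ℕ) : Finset (Fin k → Fin ε × Fin k) :=
  (subdivSet ε k).filter (fun σ => subCount σ e₀ = m)

lemma card_filter_pos_le (c : ℕ) :
    (univ.filter (fun p : Fin k => (p : ℕ) ≤ c)).card ≤ c + 1 := by
  have := Finset.card_le_card_of_injOn (fun p : Fin k => (p : ℕ))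
    (s := univ.filter (fun p : Fin k => (p : ℕ) ≤ c)) (t := Finset.range (c + 1))
    (by intro a ha
        simp only [Finset.mem_coe, Finset.mem_filter, Finset.mem_univ, true_and] at ha
        exact Finset.mem_range.mpr (Nat.lt_succ_of_le ha))
    (by intro a _ b _ h; exact Fin.ext h)
  simpa using this

lemma switch (e₀ : Fin ε) (m : ℕ) :
    (k - m) * (Afin ε k e₀ m).card ≤ (k + ε) * (Afin ε k e₀ (m + 1)).card := by
  classical
  set P : Finset ((Fin k → Fin ε × Fin k) × Fin k) :=
    ((Afin ε k e₀ m) ×ˢ univ).filter (fun p => (p.1 p.2).1 ≠ e₀) with hP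
  set B : Finset ((Fin k → Fin ε × Fin k) × (Fin ε × Fin k)) :=
    ((Afin ε k e₀ (m + 1)) ×ˢ univ).filter
      (fun p => p.2.1 ≠ e₀ ∧ ((p.2.2 : ℕ) ≤ subCount p.1 p.2.1)) with hB
  -- card P = (k - m) * card (Afin m)
  have hcardP : P.card = (Afin ε k e₀ m).card * (k - m) := by
    rw [hP, Finset.card_filter, Finset.sum_product]
    have hinner : ∀ σ ∈ Afin ε k e₀ m,
        (∑ i : Fin k, if (σ i).1 ≠ e₀ then 1 else 0) = k - m := by
      intro σ hσ
      have hm : subCount σ e₀ = m := (Finset.mem_filter.mp hσ).2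
      rw [← Finset.card_filter]
      have hsplit := Finset.card_filter_add_card_filter_not
        (s := (univ : Finset (Fin k))) (p := fun i => (σ i).1 = e₀)
      simp only [Finset.card_univ, Fintype.card_fin] at hsplit
      have : (univ.filter (fun i => (σ i).1 = e₀)).card = m := hm ▸ rfl
      simp only [ne_eq] at hsplit ⊢
      omega
    rw [Finset.sum_congr rfl hinner, Finset.sum_const, smul_eq_mul]
  -- card B ≤ (k + ε) * card (Afin (m+1))
  have hcardB : B.card ≤ (Afin ε k e₀ (m + 1)).card * (k + ε) := by
    rw [hB, Finset.card_filter, Finset.sum_product]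
    apply Finset.sum_le_card_nsmul
    intro σ' hσ'
    have hmem : σ' ∈ subdivSet ε k := (Finset.mem_filter.mp hσ').1
    calc (∑ q : Fin ε × Fin k, if q.1 ≠ e₀ ∧ ((q.2 : ℕ) ≤ subCount σ' q.1) then 1 else 0)
        ≤ ∑ q : Fin ε × Fin k, if ((q.2 : ℕ) ≤ subCount σ' q.1) then 1 else 0 := by
          apply Finset.sum_le_sum
          intro q _
          split_ifs with h1 h2
          · omega
          · exact absurd h1.2 h2
          · omega
          · omega
      _ = ∑ e' : Fin ε, ∑ p : Fin k, if ((p : ℕ) ≤ subCount σ' e') then 1 else 0 := by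
          rw [Fintype.sum_prod_type]
      _ ≤ ∑ e' : Fin ε, (subCount σ' e' + 1) := by
          apply Finset.sum_le_sum
          intro e' _
          rw [← Finset.card_filter]
          exact card_filter_pos_le _
      _ = k + ε := by
          rw [Finset.sum_add_distrib, sum_subCount σ']
          simp
  -- the injection
  have hinj : P.card ≤ B.card := by
    apply Finset.card_le_card_of_injOn (fun p => (move p.1 p.2 e₀, p.1 p.2))
    · rintro ⟨σ, i₀⟩ hp
      simp only [hP, Finset.mem_coe, Finset.mem_filter, Finset.mem_product, Finset.mem_univ, and_true] at hp
      obtain ⟨hA, hne⟩ := hp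
      have hσ : σ ∈ subdivSet ε k := (Finset.mem_filter.mp hA).1
      have hm : subCount σ e₀ = m := (Finset.mem_filter.mp hA).2
      simp only [hB, Finset.mem_coe, Finset.mem_filter, Finset.mem_product, Finset.mem_univ, and_true]
      refine ⟨Finset.mem_filter.mpr ⟨Finset.mem_filter.mpr ⟨mem_univ _, ?_⟩, ?_⟩, hne, ?_⟩
      · exact (mem_subdivSet.mp (move_mem hσ hne))
      · rw [move_count_e₀ hσ hne, hm]
      · exact move_other_count hσ hne
    · rintro ⟨σ, i₀⟩ hp ⟨τ, i₁⟩ hq hEq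
      simp only [hP, Finset.coe_filter, Set.mem_setOf_eq, Finset.mem_product,
        Finset.mem_univ, and_true] at hp hq
      obtain ⟨hAσ, hneσ⟩ := hp
      obtain ⟨hAτ, hneτ⟩ := hq
      have hσ : σ ∈ subdivSet ε k := (Finset.mem_filter.mp hAσ).1
      have hmσ : subCount σ e₀ = m := (Finset.mem_filter.mp hAσ).2
      have hτ : τ ∈ subdivSet ε k := (Finset.mem_filter.mp hAτ).1
      have hmτ : subCount τ e₀ = m := (Finset.mem_filter.mp hAτ).2
      have hM : move σ i₀ e₀ = move τ i₁ e₀ := (Prod.ext_iff.mp hEq).1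
      have hq2 : σ i₀ = τ i₁ := (Prod.ext_iff.mp hEq).2
      have hii : i₀ = i₁ := by
        apply move_inj hσ hneσ
        rw [move_at hσ hneσ, hM, move_at hτ hneτ]
        exact Prod.ext rfl (Fin.ext (by simp only [hmσ, hmτ]))
      subst hii
      have hστ : σ = τ := by
        funext i'
        by_cases hi' : i' = i₀
        · rw [hi']; exact hq2
        · rw [move_recov hσ hneσ hi', move_recov hτ hneτ hi', hM, hq2]
      rw [hστ]
  calc (k - m) * (Afin ε k e₀ m).card = (Afin ε k e₀ m).card * (k - m) := Nat.mul_comm _ _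
    _ = P.card := hcardP.symm
    _ ≤ B.card := hinj
    _ ≤ (Afin ε k e₀ (m + 1)).card * (k + ε) := hcardB
    _ = (k + ε) * (Afin ε k e₀ (m + 1)).card := Nat.mul_comm _ _

lemma numer_eq (e₀ : Fin ε) (j : ℕ) :
    ((subdivSet ε k).filter (fun σ => subCount σ e₀ ≤ j)).card =
      ∑ m ∈ Finset.range (j + 1), (Afin ε k e₀ m).card := by
  classical
  have hset : (subdivSet ε k).filter (fun σ => subCount σ e₀ ≤ j) =
      (Finset.range (j + 1)).biUnion (fun m => Afin ε k e₀ m) := by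
    ext σ
    simp only [Finset.mem_filter, Finset.mem_biUnion, Finset.mem_range, Afin]
    constructor
    · rintro ⟨h1, h2⟩; exact ⟨subCount σ e₀, by omega, h1, rfl⟩
    · rintro ⟨m, hm, h1, h2⟩; exact ⟨h1, by omega⟩
  rw [hset]
  apply Finset.card_biUnion
  intro m _ m' _ hmm'
  rw [Function.onFun, Finset.disjoint_left]
  intro σ hσ hσ'
  simp only [Afin, Finset.mem_filter] at hσ hσ'
  exact hmm' (hσ.2.symm.trans hσ'.2)

lemma classes_le_total (e₀ : Fin ε) (I : Finset ℕ) :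
    ∑ m ∈ I, (Afin ε k e₀ m).card ≤ (subdivSet ε k).card := by
  classical
  rw [← Finset.card_biUnion]
  · apply Finset.card_le_card
    intro σ hσ
    simp only [Finset.mem_biUnion, Afin, Finset.mem_filter] at hσ
    obtain ⟨m, _, h, _⟩ := hσ
    exact h
  · intro m _ m' _ hmm'
    rw [Function.onFun, Finset.disjoint_left]
    intro σ hσ hσ'
    simp only [Afin, Finset.mem_filter] at hσ hσ'
    exact hmm' (hσ.2.symm.trans hσ'.2)

set_option maxHeartbeats 2000000 in
/-- The main per-`n` estimate. -/
lemma main_est (ε k : ℕ) (e₀ : Fin ε) (j s : ℕ)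
    (h1 : (j + 1) * ε ≤ k) (h3 : (4 * (j + 2)) ^ 2 ≤ k)
    (hs1 : s * s ≤ k) (hs2 : s * ε ≤ k) :
    (((subdivSet ε k).filter (fun σ => subCount σ e₀ ≤ j)).card : ℝ)
        / ((subdivSet ε k).card : ℝ) ≤ ((j : ℝ) + 1) * Real.exp 12 / ((s : ℝ) + 1) := by
  classical
  set M : ℕ := j + 1 + s with hM
  set a : ℕ → ℝ := fun m => ((Afin ε k e₀ m).card : ℝ) with ha
  have hanneg : ∀ m, 0 ≤ a m := fun m => Nat.cast_nonneg _
  set T : ℝ := ((subdivSet ε k).card : ℝ) with hT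
  -- numeric facts
  have h3' : 16 * ((j : ℝ) + 2) ^ 2 ≤ (k : ℝ) := by
    have : ((4 * (j + 2)) ^ 2 : ℝ) ≤ (k : ℝ) := by exact_mod_cast h3
    nlinarith [this]
  have hs1' : (s : ℝ) * s ≤ k := by exact_mod_cast hs1
  have hs2' : (s : ℝ) * ε ≤ k := by exact_mod_cast hs2
  have h1' : ((j : ℝ) + 1) * ε ≤ k := by exact_mod_cast h1
  have hεnn : (0 : ℝ) ≤ ε := Nat.cast_nonneg _
  have hMk : 2 * (M : ℝ) ≤ k := by
    have hMcast : (M : ℝ) = (j : ℝ) + 1 + s := by push_cast [hM]; ring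
    rw [hMcast]
    nlinarith [sq_nonneg ((s : ℝ) - 2), sq_nonneg ((j : ℝ) + 2), h3', hs1']
  have hkpos : (0 : ℝ) < k := by nlinarith [sq_nonneg ((j : ℝ) + 2)]
  have hkM : (0 : ℝ) < (k : ℝ) - M := by nlinarith
  have hexp : (M : ℝ) * ((ε : ℝ) + M) ≤ 12 * ((k : ℝ) - M) := by
    have hMcast : (M : ℝ) = (j : ℝ) + 1 + s := by push_cast [hM]; ring
    have hMε : (M : ℝ) * ε ≤ 2 * k := by rw [hMcast]; nlinarith
    have hMM : (M : ℝ) * M ≤ 3 * k := by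
      rw [hMcast]
      nlinarith [sq_nonneg ((j : ℝ) + 1 - s), sq_nonneg ((j : ℝ) + 2)]
    nlinarith
  set ρ : ℝ := ((k : ℝ) + ε) / ((k : ℝ) - M) with hρ
  have hρ1 : 1 ≤ ρ := by
    rw [hρ, le_div_iff₀ hkM]
    linarith
  -- one-step inequality
  have hstep : ∀ t, t ≤ M → a t ≤ ρ * a (t + 1) := by
    intro t ht
    have hsw := switch (k := k) e₀ t
    have htk : t ≤ k := by
      have : (2 : ℝ) * M ≤ k := hMk
      have hMk' : (M : ℕ) ≤ k := by exact_mod_cast (by nlinarith [Nat.cast_nonneg (α := ℝ) M] :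
        (M : ℝ) ≤ (k : ℝ))
      omega
    have hcast : ((k : ℝ) - t) * a t ≤ ((k : ℝ) + ε) * a (t + 1) := by
      have := hsw
      have h' : (((k - t) * (Afin ε k e₀ t).card : ℕ) : ℝ) ≤
          (((k + ε) * (Afin ε k e₀ (t + 1)).card : ℕ) : ℝ) := by exact_mod_cast this
      push_cast [Nat.cast_sub htk] at h'
      exact h'
    have hkt : (k : ℝ) - M ≤ (k : ℝ) - t := by
      have : (t : ℝ) ≤ M := by exact_mod_cast ht
      linarith
    have h2 : ((k : ℝ) - M) * a t ≤ ((k : ℝ) + ε) * a (t + 1) := by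
      have := mul_le_mul_of_nonneg_right hkt (hanneg t)
      linarith
    rw [hρ, div_mul_eq_mul_div, le_div_iff₀ hkM]
    linarith [h2]
  -- iterated inequality
  have hchain : ∀ d t, t + d ≤ M → a t ≤ ρ ^ d * a (t + d) := by
    intro d
    induction d with
    | zero => intro t _; simp
    | succ d ih =>
      intro t ht
      have h1 : a t ≤ ρ * a (t + 1) := hstep t (by omega)
      have h2 : a (t + 1) ≤ ρ ^ d * a (t + 1 + d) := ih (t + 1) (by omega)
      calc a t ≤ ρ * a (t + 1) := h1
        _ ≤ ρ * (ρ ^ d * a (t + 1 + d)) :=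
            mul_le_mul_of_nonneg_left h2 (by linarith)
        _ = ρ ^ (d + 1) * a (t + (d + 1)) := by rw [show t + 1 + d = t + (d + 1) by omega]; ring
  -- ρ ^ M ≤ exp 12
  have hρM : ρ ^ M ≤ Real.exp 12 := by
    set x : ℝ := ((ε : ℝ) + M) / ((k : ℝ) - M) with hx
    have hxnn : 0 ≤ x := div_nonneg (by positivity) (le_of_lt hkM)
    have hρx : ρ = 1 + x := by rw [hρ, hx]; field_simp; ring
    have h1 : ρ ≤ Real.exp x := by
      rw [hρx]
      linarith [Real.add_one_le_exp x]
    have h2 : ρ ^ M ≤ Real.exp x ^ M := by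
      apply pow_le_pow_left₀ (by linarith) h1
    have h3 : Real.exp x ^ M = Real.exp (x * M) := by
      rw [← Real.exp_nat_mul]; ring_nf
    have h4 : x * M ≤ 12 := by
      rw [hx, div_mul_eq_mul_div, div_le_iff₀ hkM]
      nlinarith [hexp]
    calc ρ ^ M ≤ Real.exp x ^ M := h2
      _ = Real.exp (x * M) := h3
      _ ≤ Real.exp 12 := Real.exp_le_exp.mpr h4
  -- each small class is dominated
  have hdom : ∀ m ≤ j, ∀ M' ∈ Finset.Ico (j + 1) (M + 1), a m ≤ Real.exp 12 * a M' := by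
    intro m hm M' hM'
    simp only [Finset.mem_Ico] at hM'
    have hd : m + (M' - m) = M' := by omega
    have h1 : a m ≤ ρ ^ (M' - m) * a M' := by
      have := hchain (M' - m) m (by omega)
      rwa [hd] at this
    have h2 : ρ ^ (M' - m) ≤ ρ ^ M := pow_le_pow_right₀ hρ1 (by omega)
    calc a m ≤ ρ ^ (M' - m) * a M' := h1
      _ ≤ ρ ^ M * a M' := mul_le_mul_of_nonneg_right h2 (hanneg _)
      _ ≤ Real.exp 12 * a M' := mul_le_mul_of_nonneg_right hρM (hanneg _)
  -- sum the dominations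
  have hIco : ∑ M' ∈ Finset.Ico (j + 1) (M + 1), a M' ≤ T := by
    rw [ha, hT, ← Nat.cast_sum]
    exact_mod_cast classes_le_total e₀ (Finset.Ico (j + 1) (M + 1))
  have hTnn : 0 ≤ T := Nat.cast_nonneg _
  have hcardIco : (Finset.Ico (j + 1) (M + 1)).card = s + 1 := by
    rw [Nat.card_Ico]; omega
  have hsingle : ∀ m ≤ j, ((s : ℝ) + 1) * a m ≤ Real.exp 12 * T := by
    intro m hm
    have h1 : ∑ M' ∈ Finset.Ico (j + 1) (M + 1), a m ≤
        ∑ M' ∈ Finset.Ico (j + 1) (M + 1), Real.exp 12 * a M' :=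
      Finset.sum_le_sum (fun M' hM' => hdom m hm M' hM')
    rw [Finset.sum_const, hcardIco, ← Finset.mul_sum] at h1
    have h2 : Real.exp 12 * (∑ M' ∈ Finset.Ico (j + 1) (M + 1), a M') ≤ Real.exp 12 * T :=
      mul_le_mul_of_nonneg_left hIco (le_of_lt (Real.exp_pos _))
    calc ((s : ℝ) + 1) * a m = ((s + 1 : ℕ) : ℝ) * a m := by push_cast; ring
      _ = (s + 1) • a m := by rw [nsmul_eq_mul]
      _ ≤ Real.exp 12 * (∑ M' ∈ Finset.Ico (j + 1) (M + 1), a M') := h1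
      _ ≤ Real.exp 12 * T := h2
  set N : ℝ := (((subdivSet ε k).filter (fun σ => subCount σ e₀ ≤ j)).card : ℝ) with hN
  have hNsum : N = ∑ m ∈ Finset.range (j + 1), a m := by
    rw [hN, numer_eq e₀ j]; push_cast; rfl
  have hNbound : ((s : ℝ) + 1) * N ≤ ((j : ℝ) + 1) * (Real.exp 12 * T) := by
    rw [hNsum, Finset.mul_sum]
    calc ∑ m ∈ Finset.range (j + 1), ((s : ℝ) + 1) * a m
        ≤ ∑ m ∈ Finset.range (j + 1), Real.exp 12 * T := by
          apply Finset.sum_le_sum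
          intro m hm
          exact hsingle m (by simpa [Nat.lt_succ_iff] using hm)
      _ = ((j : ℝ) + 1) * (Real.exp 12 * T) := by
          rw [Finset.sum_const, Finset.card_range, nsmul_eq_mul]; push_cast; ring
  have hNnn : 0 ≤ N := Nat.cast_nonneg _
  rcases eq_or_lt_of_le hTnn with hT0 | hTpos
  · -- T = 0: numerator is also 0
    have hNT : N ≤ T := by
      rw [hN, hT]
      exact_mod_cast Finset.card_le_card (Finset.filter_subset _ _)
    have : N = 0 := le_antisymm (by linarith) hNnn
    rw [this]
    simp only [zero_div]
    positivity
  · rw [div_le_div_iff₀ hTpos (by positivity)]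
    nlinarith [hNbound]

end Stmt12Aux


/-- if `e(K) = o(k)`, then for a uniformly random core with kernel `K` and
`k` subdivision vertices (equivalently, uniformly random subdivision of `K` by `k` vertices),
the subdivision number of any fixed edge `e` tends to infinity whp: for every fixed `j`,
the probability that at most `j` subdivision vertices are placed on `e` is `o(1)`. -/
theorem stmt12 (eK k : ℕ → ℕ) (hpos : ∀ n, 0 < eK n) (ed : ∀ n, Fin (eK n))
    (ho : (fun n => (eK n : ℝ)) =o[Filter.atTop] (fun n => (k n : ℝ))) (j : ℕ) :
    Tendsto (fun n =>
        (((subdivSet (eK n) (k n)).filter (fun σ => subCount σ (ed n) ≤ j)).card : ℝ)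
          / ((subdivSet (eK n) (k n)).card : ℝ)) atTop (nhds 0) := by
  classical
  -- eventual bound m * eK n ≤ k n for each fixed m
  have hev : ∀ m : ℕ, 0 < m → ∀ᶠ n in atTop, m * eK n ≤ k n := by
    intro m hm
    have hdef := ho.def (show (0 : ℝ) < 1 / m by positivity)
    filter_upwards [hdef] with n hn
    simp only [Real.norm_natCast] at hn
    have h1 : (m : ℝ) * eK n ≤ (m : ℝ) * ((1 / m) * k n) :=
      mul_le_mul_of_nonneg_left hn (Nat.cast_nonneg _)
    have hmR : (0 : ℝ) < m := by exact_mod_cast hm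
    have h2 : (m : ℝ) * ((1 / m) * k n) = k n := by field_simp
    have : ((m * eK n : ℕ) : ℝ) ≤ ((k n : ℕ) : ℝ) := by push_cast; linarith
    exact_mod_cast this
  set s : ℕ → ℕ := fun n => min (Nat.sqrt (k n)) (k n / eK n) with hs
  have hsT : Tendsto s atTop atTop := by
    rw [tendsto_atTop]
    intro B
    filter_upwards [hev (B * B + B + 1) (by omega)] with n hn
    have hε1 : 1 ≤ eK n := hpos n
    have hk1 : B * B + B + 1 ≤ k n := by
      calc B * B + B + 1 ≤ (B * B + B + 1) * eK n := Nat.le_mul_of_pos_right _ (hpos n)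
        _ ≤ k n := hn
    refine le_min ?_ ?_
    · rw [Nat.le_sqrt]
      omega
    · rw [Nat.le_div_iff_mul_le (hpos n)]
      calc B * eK n ≤ (B * B + B + 1) * eK n := Nat.mul_le_mul_right _ (by omega)
        _ ≤ k n := hn
  have hsT' : Tendsto (fun n => (s n : ℝ) + 1) atTop atTop := by
    apply Filter.tendsto_atTop_add_const_right
    exact tendsto_natCast_atTop_atTop.comp hsT
  have hRHS : Tendsto (fun n => ((j : ℝ) + 1) * Real.exp 12 / ((s n : ℝ) + 1))
      atTop (nhds 0) := Filter.Tendsto.div_atTop tendsto_const_nhds hsT'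
  apply tendsto_of_tendsto_of_tendsto_of_le_of_le' tendsto_const_nhds hRHS
  · exact Filter.Eventually.of_forall (fun n => by positivity)
  · filter_upwards [hev (j + 1) (by omega), hev ((4 * (j + 2)) ^ 2) (by positivity)]
      with n hA hB
    have h3 : (4 * (j + 2)) ^ 2 ≤ k n := by
      calc (4 * (j + 2)) ^ 2 ≤ (4 * (j + 2)) ^ 2 * eK n :=
            Nat.le_mul_of_pos_right _ (hpos n)
        _ ≤ k n := hB
    have hs1 : s n * s n ≤ k n := by
      have h1 : s n ≤ Nat.sqrt (k n) := min_le_left _ _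
      calc s n * s n ≤ Nat.sqrt (k n) * Nat.sqrt (k n) := Nat.mul_le_mul h1 h1
        _ ≤ k n := by have := Nat.sqrt_le' (k n); rwa [pow_two] at this
    have hs2 : s n * eK n ≤ k n := by
      have h1 : s n ≤ k n / eK n := min_le_right _ _
      calc s n * eK n ≤ (k n / eK n) * eK n := Nat.mul_le_mul_right _ h1
        _ ≤ k n := Nat.div_mul_le_self _ _
    exact Stmt12Aux.main_est (eK n) (k n) (ed n) j (s n) hA h3 hs1 hs2
end
end
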